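/- arXiv:1412.8042 — 5 statements merged into one kernel-verified Lean document; each statement's English description precedes it below -/
import Mathlib

section
/- Let G be a finite abelian p-group of exponent pⁿ and F a finite field of characteristic not dividing |G|. The idempotents Ĝ together with e_H = Ĥ − Ĥ♯, for H ranging over co-cyclic subgroups of G, are pairwise orthogonal and their sum equals 1 in FG. -/
open scoped Classical

section Chain

variable {Q : Type*} [Group Q] [Fintype Q]

lemma cyclic_subgroup_le_of_card_dvd [IsCyclic Q] (A B : Subgroup Q)
    (h : Nat.card A ∣ Nat.card B) : A ≤ B := by
  classical
  intro x hx
  have hBpos : 0 < Nat.card B := Nat.card_pos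
  have hxB : x ^ (Nat.card B) = 1 := by
    have h1 : orderOf x ∣ Nat.card A := Subgroup.orderOf_dvd_natCard A hx
    exact orderOf_dvd_iff_pow_eq_one.mp (h1.trans h)
  have hsub : (B : Set Q).toFinset ⊆ ({a : Q | a ^ (Nat.card B) = 1} : Finset Q) := by
    intro y hy
    simp only [Finset.mem_filter, Finset.mem_univ, true_and, Set.mem_toFinset] at hy ⊢
    have : orderOf y ∣ Nat.card B := Subgroup.orderOf_dvd_natCard B hy
    exact orderOf_dvd_iff_pow_eq_one.mp this
  have hcard1 : (B : Set Q).toFinset.card = Nat.card B := by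
    simp [Set.toFinset_card, Nat.card_eq_fintype_card]
  have hle : ({a : Q | a ^ (Nat.card B) = 1} : Finset Q).card ≤ Nat.card B :=
    IsCyclic.card_pow_eq_one_le hBpos
  have heq : (B : Set Q).toFinset = ({a : Q | a ^ (Nat.card B) = 1} : Finset Q) :=
    Finset.eq_of_subset_of_card_le hsub (by omega)
  have : x ∈ (B : Set Q).toFinset := by
    rw [heq]
    simp only [Finset.mem_filter, Finset.mem_univ, true_and]
    exact hxB
  simpa using this

lemma pgroup_cyclic_total {p : ℕ} (hp : p.Prime) [IsCyclic Q]
    (hQ : IsPGroup p Q) (A B : Subgroup Q) : A ≤ B ∨ B ≤ A := by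
  haveI := Fact.mk hp
  obtain ⟨k, hk⟩ := IsPGroup.iff_card.mp hQ
  obtain ⟨a, _, hA⟩ := (Nat.dvd_prime_pow hp).mp (hk ▸ Subgroup.card_subgroup_dvd_card A)
  obtain ⟨b, _, hB⟩ := (Nat.dvd_prime_pow hp).mp (hk ▸ Subgroup.card_subgroup_dvd_card B)
  rcases le_total a b with h | h
  · exact Or.inl (cyclic_subgroup_le_of_card_dvd A B (by rw [hA, hB]; exact pow_dvd_pow p h))
  · exact Or.inr (cyclic_subgroup_le_of_card_dvd B A (by rw [hA, hB]; exact pow_dvd_pow p h))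

end Chain

section Sharp

variable {G : Type*} [CommGroup G] [Fintype G]

lemma sharp_le {p : ℕ} (hp : p.Prime) (hpG : IsPGroup p G) {H Hs X : Subgroup G}
    (hcyc : IsCyclic (G ⧸ H)) (h1 : H ≤ Hs) (h2 : H.relIndex Hs = p)
    (hHX : H ≤ X) (hne : H ≠ X) : Hs ≤ X := by
  set π := QuotientGroup.mk' H with hπ
  have hker : π.ker = H := QuotientGroup.ker_mk' H
  have hquot : IsPGroup p (G ⧸ H) := IsPGroup.to_quotient hpG H
  rcases pgroup_cyclic_total hp hquot (Subgroup.map π Hs) (Subgroup.map π X) with h | h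
  · have hh : Hs ≤ Subgroup.comap π (Subgroup.map π X) :=
      le_trans (Subgroup.le_comap_map _ _) (Subgroup.comap_mono h)
    rwa [Subgroup.comap_map_eq, hker, sup_of_le_left hHX] at hh
  · have hX : X ≤ Hs := by
      have hh : X ≤ Subgroup.comap π (Subgroup.map π Hs) :=
        le_trans (Subgroup.le_comap_map _ _) (Subgroup.comap_mono h)
      rwa [Subgroup.comap_map_eq, hker, sup_of_le_left h1] at hh
    have hmul : H.relIndex X * X.relIndex Hs = p := by
      rw [← h2]; exact Subgroup.relIndex_mul_relIndex _ _ _ hHX hX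
    have hne1 : H.relIndex X ≠ 1 := fun hc => hne (le_antisymm hHX (Subgroup.relIndex_eq_one.mp hc))
    have hb : X.relIndex Hs = 1 := by
      have hdvd : X.relIndex Hs ∣ p := Dvd.intro_left _ hmul
      rcases (Nat.Prime.eq_one_or_self_of_dvd hp _ hdvd) with hb | hb
      · exact hb
      · rw [hb] at hmul
        have : H.relIndex X = 1 := by
          have := Nat.eq_of_mul_eq_mul_right hp.pos (hmul.trans (one_mul p).symm)
          exact this
        exact absurd this hne1
    exact Subgroup.relIndex_eq_one.mp hb

end Sharp

/-- `hat F H` is the element `Ĥ = (1/|H|) ∑_{h ∈ H} h` of the group algebra `F G`. -/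
noncomputable def hat (F : Type) [Field F] {G : Type} [Group G] [Fintype G]
    (H : Subgroup G) : MonoidAlgebra F G :=
  (Nat.card H : F)⁻¹ • ∑ h ∈ (H : Set G).toFinset, MonoidAlgebra.single h (1 : F)

section CharSum

variable {G : Type} [CommGroup G] [Fintype G]

lemma sum_char_eq_zero {R : Type*} [Field R] (χ : G →* R) (H : Subgroup G)
    {h₀ : G} (h₀H : h₀ ∈ H) (hne : χ h₀ ≠ 1) :
    ∑ h ∈ (H : Set G).toFinset, χ h = 0 := by
  have key : χ h₀ * ∑ h ∈ (H : Set G).toFinset, χ h = ∑ h ∈ (H : Set G).toFinset, χ h := by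
    rw [Finset.mul_sum]
    simp_rw [← map_mul]
    apply Finset.sum_nbij' (fun h => h₀ * h) (fun h => h₀⁻¹ * h)
    · intro a ha
      simp only [Set.mem_toFinset, SetLike.mem_coe] at ha ⊢
      exact H.mul_mem h₀H ha
    · intro a ha
      simp only [Set.mem_toFinset, SetLike.mem_coe] at ha ⊢
      exact H.mul_mem (H.inv_mem h₀H) ha
    · intro a _; simp [mul_assoc]
    · intro a _; simp [← mul_assoc]
    · intro a _; rfl
  have h2 : (χ h₀ - 1) * ∑ h ∈ (H : Set G).toFinset, χ h = 0 := by
    rw [sub_mul, one_mul, key, sub_self]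
  rcases mul_eq_zero.mp h2 with h | h
  · exact absurd (sub_eq_zero.mp h) hne
  · exact h

lemma card_toFinset_subgroup (H : Subgroup G) :
    (H : Set G).toFinset.card = Nat.card H := by
  simp [Set.toFinset_card, Nat.card_eq_fintype_card]

lemma ev_hat (F : Type) [Field F] {A : Type} [Field A] [Algebra F A]
    (H : Subgroup G) (hH : (Nat.card H : F) ≠ 0) (χ : G →* Aˣ) :
    MonoidAlgebra.lift F A G ((Units.coeHom A).comp χ) (hat F H) =
      if H ≤ χ.ker then 1 else 0 := by
  rw [hat, map_smul, map_sum]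
  simp only [MonoidAlgebra.lift_single, one_smul]
  by_cases hle : H ≤ χ.ker
  · rw [if_pos hle]
    have hs : ∑ h ∈ (H : Set G).toFinset, ((Units.coeHom A).comp χ) h = (Nat.card H : A) := by
      rw [Finset.sum_congr rfl (fun h hh => ?_), Finset.sum_const, nsmul_eq_mul, mul_one,
        card_toFinset_subgroup]
      have hmem : h ∈ H := by simpa using hh
      have : χ h = 1 := MonoidHom.mem_ker.mp (hle hmem)
      simp [this]
    rw [hs, ← map_natCast (algebraMap F A), Algebra.smul_def, ← map_mul,
      inv_mul_cancel₀ hH, map_one]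
  · rw [if_neg hle]
    obtain ⟨h₀, h₀H, hne⟩ : ∃ h₀ ∈ H, χ h₀ ≠ 1 := by
      by_contra hc
      push_neg at hc
      exact hle fun g hg => MonoidHom.mem_ker.mpr (hc g hg)
    have hne' : ((Units.coeHom A).comp χ) h₀ ≠ 1 := by
      simpa using fun hc => hne (Units.val_eq_one.mp hc)
    rw [sum_char_eq_zero _ H h₀H hne', smul_zero]

lemma ev_eq_zero (F : Type) [Field F] (hG : (Fintype.card G : F) ≠ 0)
    (x : MonoidAlgebra F G)
    (hx : ∀ χ : G →* (AlgebraicClosure F)ˣ,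
      MonoidAlgebra.lift F (AlgebraicClosure F) G ((Units.coeHom _).comp χ) x = 0) :
    x = 0 := by
  set A := AlgebraicClosure F with hA
  have hinj : Function.Injective (algebraMap F A) := (algebraMap F A).injective
  have hGA : (Fintype.card G : A) ≠ 0 := by
    rw [← map_natCast (algebraMap F A)]
    exact fun hc => hG (hinj (by rwa [map_zero]))
  haveI : NeZero ((Monoid.exponent G : A)) := by
    refine ⟨?_⟩
    have hdvd : Monoid.exponent G ∣ Fintype.card G := Group.exponent_dvd_card
    obtain ⟨c, hc⟩ := hdvd
    intro h
    apply hGA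
    rw [hc, Nat.cast_mul, h, zero_mul]
  obtain ⟨e⟩ := CommGroup.monoidHom_mulEquiv_of_hasEnoughRootsOfUnity G A
  haveI : Fintype (G →* Aˣ) := Fintype.ofEquiv G e.toEquiv.symm
  have hcardχ : Fintype.card (G →* Aˣ) = Fintype.card G := Fintype.card_congr e.toEquiv
  have hcol : ∀ a : G, a ≠ 1 → ∑ χ : G →* Aˣ, ((χ a : A)) = 0 := by
    intro a ha
    obtain ⟨ψ, hψ⟩ := CommGroup.exists_apply_ne_one_of_hasEnoughRootsOfUnity G A ha
    have key : ((ψ a : A)) * ∑ χ : G →* Aˣ, ((χ a : A)) = ∑ χ : G →* Aˣ, ((χ a : A)) := by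
      rw [Finset.mul_sum]
      exact Fintype.sum_bijective (fun χ => ψ * χ) (Group.mulLeft_bijective ψ) _ _
        (fun χ => by simp)
    have h2 : (((ψ a : A)) - 1) * ∑ χ : G →* Aˣ, ((χ a : A)) = 0 := by
      rw [sub_mul, one_mul, key, sub_self]
    rcases mul_eq_zero.mp h2 with h | h
    · exact absurd (Units.val_eq_one.mp (sub_eq_zero.mp h)) hψ
    · exact h
  have hcol1 : ∀ a : G, a = 1 → ∑ χ : G →* Aˣ, ((χ a : A)) = (Fintype.card G : A) := by
    intro a ha; subst ha
    simp [Finset.card_univ, hcardχ]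
  refine MonoidAlgebra.ext (Finsupp.ext fun g => ?_)
  simp only [MonoidAlgebra.coeff_zero, Finsupp.coe_zero, Pi.zero_apply]
  have h0 : ∑ χ : G →* Aˣ, ((χ g⁻¹ : A)) *
      MonoidAlgebra.lift F A G ((Units.coeHom A).comp χ) x = 0 := by
    exact Finset.sum_eq_zero fun χ _ => mul_eq_zero_of_right _ (hx χ)
  have hexpand : ∀ χ : G →* Aˣ, ((χ g⁻¹ : A)) *
      MonoidAlgebra.lift F A G ((Units.coeHom A).comp χ) x =
      ∑ h ∈ x.coeff.support, algebraMap F A (x.coeff h) * ((χ (g⁻¹ * h) : A)) := by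
    intro χ
    rw [MonoidAlgebra.lift_apply', Finsupp.sum, Finset.mul_sum]
    refine Finset.sum_congr rfl fun h _ => ?_
    simp only [MonoidHom.coe_comp, Units.coeHom_apply, Function.comp_apply, map_mul,
      Units.val_mul]
    ring
  rw [Finset.sum_congr rfl (fun χ _ => hexpand χ), Finset.sum_comm] at h0
  have hinner : ∀ h : G, ∑ χ : G →* Aˣ, ((χ (g⁻¹ * h) : A)) =
      if h = g then (Fintype.card G : A) else 0 := by
    intro h
    by_cases hh : h = g
    · rw [if_pos hh, hcol1 _ (by rw [hh, inv_mul_cancel])]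
    · rw [if_neg hh]
      exact hcol _ (fun hc => hh (by rwa [inv_mul_eq_one, eq_comm] at hc))
  simp_rw [← Finset.mul_sum, hinner] at h0
  have h1 : ∑ h ∈ x.coeff.support, algebraMap F A (x.coeff h) *
      (if h = g then (Fintype.card G : A) else 0) =
      ∑ h ∈ x.coeff.support, (if h = g then algebraMap F A (x.coeff h) * (Fintype.card G : A) else 0) := by
    refine Finset.sum_congr rfl fun h _ => ?_
    split <;> simp
  rw [h1, Finset.sum_ite_eq' x.coeff.support g _] at h0
  by_cases hg : g ∈ x.coeff.support
  · rw [if_pos hg] at h0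
    rcases mul_eq_zero.mp h0 with h | h
    · exact hinj (by rw [map_zero]; exact h)
    · exact absurd h hGA
  · simpa using hg

theorem stmt4 (p n : ℕ) (hp : p.Prime) (F : Type) [Field F] [Fintype F]
    (G : Type) [CommGroup G] [Fintype G]
    (hexp : Monoid.exponent G = p ^ n)
    (hchar : ¬ (ringChar F ∣ Fintype.card G))
    -- `sharp H` is the unique subgroup `H♯` containing a co-cyclic subgroup `H`
    -- with `[H♯ : H] = p`
    (sharp : Subgroup G → Subgroup G)
    (hsharp : ∀ H : Subgroup G, IsCyclic (G ⧸ H) → Nontrivial (G ⧸ H) →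
      H ≤ sharp H ∧ H.relIndex (sharp H) = p)
    -- `S` is the set of all co-cyclic subgroups of `G`
    (S : Finset (Subgroup G))
    (hS : ∀ H : Subgroup G, H ∈ S ↔ (IsCyclic (G ⧸ H) ∧ Nontrivial (G ⧸ H))) :
    (hat F (⊤ : Subgroup G) + ∑ H ∈ S, (hat F H - hat F (sharp H)) = 1) ∧
    (∀ H ∈ S, hat F (⊤ : Subgroup G) * (hat F H - hat F (sharp H)) = 0) ∧
    (∀ H ∈ S, ∀ K ∈ S, H ≠ K →
      (hat F H - hat F (sharp H)) * (hat F K - hat F (sharp K)) = 0) := by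
  have hcardF : (Fintype.card G : F) ≠ 0 := by
    intro h
    exact hchar ((CharP.cast_eq_zero_iff F (ringChar F) _).mp h)
  have hdvdF : ∀ m : ℕ, m ∣ Fintype.card G → (m : F) ≠ 0 := by
    rintro m ⟨c, hc⟩ h
    apply hcardF
    rw [hc]; push_cast; rw [h, zero_mul]
  have hH0 : ∀ H : Subgroup G, (Nat.card H : F) ≠ 0 := fun H =>
    hdvdF _ (by rw [← Nat.card_eq_fintype_card]; exact Subgroup.card_subgroup_dvd_card H)
  have hpG : IsPGroup p G := fun g => ⟨n, by rw [← hexp]; exact Monoid.pow_exponent_eq_one g⟩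
  set A := AlgebraicClosure F with hA
  have hker_top : ∀ χ : G →* Aˣ, (χ.ker = ⊤ ↔ χ = 1) := by
    intro χ
    constructor
    · intro h
      ext g
      have hg : χ g = 1 := MonoidHom.mem_ker.mp (by rw [h]; trivial)
      simp [hg]
    · intro h; subst h; exact MonoidHom.ker_one
  have hker_mem : ∀ χ : G →* Aˣ, χ ≠ 1 → χ.ker ∈ S := by
    intro χ hχ
    rw [hS]
    constructor
    · have hinj2 : Function.Injective ((Units.coeHom A).comp (QuotientGroup.kerLift χ)) := by
        intro a b hab
        exact QuotientGroup.kerLift_injective χ (Units.ext hab)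
      exact isCyclic_of_subgroup_isDomain _ hinj2
    · obtain ⟨g, hg⟩ : ∃ g, χ g ≠ 1 := by
        by_contra hc; push_neg at hc; exact hχ (MonoidHom.ext hc)
      exact ⟨(g : G ⧸ χ.ker), 1, by
        rw [Ne, QuotientGroup.eq_one_iff]
        exact fun hk => hg (MonoidHom.mem_ker.mp hk)⟩
  have hfac : ∀ (χ : G →* Aˣ), ∀ H ∈ S,
      ((if H ≤ χ.ker then (1 : A) else 0) - (if sharp H ≤ χ.ker then (1 : A) else 0)) =
      if χ = 1 then 0 else (if H = χ.ker then 1 else 0) := by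
    intro χ H hH
    obtain ⟨hcyc, hnt⟩ := (hS H).mp hH
    obtain ⟨hle, hrel⟩ := hsharp H hcyc hnt
    have hHs_ne : ¬ sharp H ≤ H := by
      intro hc
      have h1 : H.relIndex (sharp H) = 1 := Subgroup.relIndex_eq_one.mpr hc
      rw [hrel] at h1
      exact hp.one_lt.ne' h1
    by_cases hχ : χ = 1
    · subst hχ
      rw [if_pos rfl, MonoidHom.ker_one, if_pos le_top, if_pos le_top, sub_self]
    · rw [if_neg hχ]
      by_cases h1 : H ≤ χ.ker
      · by_cases h2 : H = χ.ker
        · have hsn : ¬ sharp H ≤ χ.ker := by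
            intro hc; rw [← h2] at hc; exact hHs_ne hc
          rw [if_pos h2, if_pos h1, if_neg hsn, sub_zero]
        · have hs := sharp_le hp hpG hcyc hle hrel h1 h2
          rw [if_neg h2, if_pos h1, if_pos hs, sub_self]
      · rw [if_neg h1, if_neg (fun hc => h1 (hle.trans hc)), sub_self,
          if_neg (fun hc => h1 (le_of_eq hc))]
  have hevhat : ∀ (χ : G →* Aˣ) (H : Subgroup G),
      MonoidAlgebra.lift F A G ((Units.coeHom A).comp χ) (hat F H) =
        if H ≤ χ.ker then 1 else 0 := fun χ H => ev_hat F H (hH0 H) χ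
  have htopker : ∀ χ : G →* Aˣ, χ ≠ 1 → ¬ (⊤ : Subgroup G) ≤ χ.ker := by
    intro χ hχ hc
    exact hχ ((hker_top χ).mp (top_le_iff.mp hc))
  refine ⟨?_, ?_, ?_⟩
  · have key1 : hat F (⊤ : Subgroup G) + ∑ H ∈ S, (hat F H - hat F (sharp H)) - 1 = 0 := by
      apply ev_eq_zero F hcardF
      intro χ
      have hsum : ∑ H ∈ S, (MonoidAlgebra.lift F A G ((Units.coeHom A).comp χ))
          (hat F H - hat F (sharp H)) =
          ∑ H ∈ S, (if χ = 1 then 0 else if H = χ.ker then (1 : A) else 0) :=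
        Finset.sum_congr rfl (fun H hH => by rw [map_sub, hevhat, hevhat]; exact hfac χ H hH)
      rw [map_sub, map_add, map_sum, map_one, hevhat, hsum]
      by_cases hχ : χ = 1
      · subst hχ
        simp [MonoidHom.ker_one]
      · rw [if_neg (htopker χ hχ)]
        simp only [if_neg hχ]
        rw [Finset.sum_ite_eq' S χ.ker (fun _ => (1 : A)), if_pos (hker_mem χ hχ)]
        ring
    have := sub_eq_zero.mp key1
    simpa using this
  · intro H hH
    apply ev_eq_zero F hcardF
    intro χ
    rw [map_mul, map_sub, hevhat, hevhat, hevhat, hfac χ H hH]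
    by_cases hχ : χ = 1
    · rw [if_pos hχ, mul_zero]
    · rw [if_neg (htopker χ hχ), zero_mul]
  · intro H hH K hK hne
    apply ev_eq_zero F hcardF
    intro χ
    rw [map_mul, map_sub, map_sub, hevhat, hevhat, hevhat, hevhat,
      hfac χ H hH, hfac χ K hK]
    by_cases hχ : χ = 1
    · rw [if_pos hχ, zero_mul]
    · rw [if_neg hχ, if_neg hχ]
      by_cases h1 : H = χ.ker
      · by_cases h2 : K = χ.ker
        · exact absurd (h1.trans h2.symm) hne
        · rw [if_neg h2, mul_zero]
      · rw [if_neg h1, zero_mul]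
end CharSum
end

section
/- Let G be a cyclic group of order 2pⁿ for an odd prime p, written G = C × A with C = {1,t} of order 2 and A the p-Sylow subgroup, and let F_q be a finite field with ord(q) = φ(pⁿ) in U(Z_{2pⁿ}). If e₀,...,eₙ are the primitive idempotents of F_q A, then the primitive idempotents of F_q G are exactly ((1+t)/2)·e_i and ((1−t)/2)·e_i for 0 ≤ i ≤ n. -/
open scoped Classical

/-- `e` is a primitive idempotent: a nonzero idempotent which is not the sum of two
nonzero orthogonal idempotents. -/
def IsPrimIdem {R : Type} [Ring R] (e : R) : Prop :=
  e ≠ 0 ∧ e * e = e ∧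
    ∀ a b : R, a * a = a → b * b = b → a * b = 0 → b * a = 0 → e = a + b →
      a = 0 ∨ b = 0

noncomputable section


lemma sum_orth_idem {R : Type} [CommRing R] (S : Finset ℕ) (c : ℕ → R)
    (hidem : ∀ j ∈ S, c j * c j = c j)
    (horth : ∀ i ∈ S, ∀ j ∈ S, i ≠ j → c i * c j = 0) :
    (∑ j ∈ S, c j) * (∑ j ∈ S, c j) = ∑ j ∈ S, c j := by
  rw [Finset.sum_mul_sum]
  refine Finset.sum_congr rfl fun i hi => ?_
  rw [Finset.sum_eq_single i (fun j hj hne => horth i hi j hj (Ne.symm hne))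
    (fun h => absurd hi h)]
  exact hidem i hi

lemma keyA {R : Type} [CommRing R] (x : R) (hx : IsPrimIdem x) :
    ∀ (S : Finset ℕ) (c : ℕ → R),
    (∀ j ∈ S, c j * c j = c j) →
    (∀ i ∈ S, ∀ j ∈ S, i ≠ j → c i * c j = 0) →
    x = (∑ j ∈ S, c j) →
    ∃ j ∈ S, x = c j := by
  intro S
  induction S using Finset.induction_on with
  | empty =>
    intro c _ _ hsum
    exact absurd (by simpa using hsum) hx.1
  | @insert j s hj ih =>
    intro c hidem horth hsum
    have hjmem : j ∈ insert j s := Finset.mem_insert_self j s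
    have hsub : ∀ i ∈ s, i ∈ insert j s := fun i hi => Finset.mem_insert_of_mem hi
    have hT : (∑ i ∈ s, c i) * (∑ i ∈ s, c i) = ∑ i ∈ s, c i :=
      sum_orth_idem s c (fun i hi => hidem i (hsub i hi))
        (fun i hi k hk => horth i (hsub i hi) k (hsub k hk))
    have hcjT : c j * (∑ i ∈ s, c i) = 0 := by
      rw [Finset.mul_sum]
      exact Finset.sum_eq_zero fun i hi =>
        horth j hjmem i (hsub i hi) (fun h => hj (h ▸ hi))
    have hTcj : (∑ i ∈ s, c i) * c j = 0 := by rw [mul_comm]; exact hcjT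
    rw [Finset.sum_insert hj] at hsum
    rcases hx.2.2 (c j) (∑ i ∈ s, c i) (hidem j hjmem) hT hcjT hTcj hsum with h | h
    · rw [h, zero_add] at hsum
      obtain ⟨i, hi, hxi⟩ := ih c (fun i hi => hidem i (hsub i hi))
        (fun i hi k hk => horth i (hsub i hi) k (hsub k hk)) hsum
      exact ⟨i, hsub i hi, hxi⟩
    · rw [h, add_zero] at hsum
      exact ⟨j, hjmem, hsum⟩


def chi (F : Type) [Field F] (ε : F) (hε : ε * ε = 1) : Multiplicative (ZMod 2) →* F where
  toFun c := if Multiplicative.toAdd c = 0 then 1 else ε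
  map_one' := by simp
  map_mul' x y := by
    have h : ∀ z : ZMod 2, z = 0 ∨ z = 1 := by decide
    have hxy : Multiplicative.toAdd (x * y) = Multiplicative.toAdd x + Multiplicative.toAdd y :=
      rfl
    rcases h (Multiplicative.toAdd x) with hx | hx <;>
      rcases h (Multiplicative.toAdd y) with hy | hy <;>
        simp [hxy, hx, hy, hε, show (1:ZMod 2)+1 = 0 by decide]

lemma chi_one (F : Type) [Field F] (ε : F) (hε : ε * ε = 1) :
    chi F ε hε 1 = 1 := by simp [chi]

lemma chi_t (F : Type) [Field F] (ε : F) (hε : ε * ε = 1) :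
    chi F ε hε (Multiplicative.ofAdd (1 : ZMod 2)) = ε := by
  simp [chi]

def psi (F : Type) [Field F] (A : Type) [CommGroup A] (ε : F) (hε : ε * ε = 1) :
    Multiplicative (ZMod 2) × A →* MonoidAlgebra F A where
  toFun g := MonoidAlgebra.single g.2 (chi F ε hε g.1)
  map_one' := by simp [MonoidAlgebra.one_def, chi_one]
  map_mul' g h := by
    show MonoidAlgebra.single (g.2 * h.2) (chi F ε hε (g.1 * h.1)) = _
    rw [MonoidAlgebra.single_mul_single, map_mul]

def pim (F : Type) [Field F] (A : Type) [CommGroup A] (ε : F) (hε : ε * ε = 1) :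
    MonoidAlgebra F (Multiplicative (ZMod 2) × A) →ₐ[F] MonoidAlgebra F A :=
  MonoidAlgebra.lift F _ _ (psi F A ε hε)

lemma pim_single (F : Type) [Field F] (A : Type) [CommGroup A] (ε : F) (hε : ε * ε = 1)
    (c : Multiplicative (ZMod 2)) (a : A) (s : F) :
    pim F A ε hε (MonoidAlgebra.single (c, a) s) =
      MonoidAlgebra.single a (s * chi F ε hε c) := by
  rw [pim, MonoidAlgebra.lift_single]
  show s • MonoidAlgebra.single a (chi F ε hε c) = _
  rw [MonoidAlgebra.smul_single', mul_comm]

lemma pim_iota (F : Type) [Field F] (A : Type) [CommGroup A] (ε : F) (hε : ε * ε = 1)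
    (y : MonoidAlgebra F A) :
    pim F A ε hε
      (MonoidAlgebra.mapDomainRingHom F (MonoidHom.inr (Multiplicative (ZMod 2)) A) y) = y := by
  induction y using MonoidAlgebra.induction_linear with
  | zero => simp
  | add f g hf hg => rw [map_add, map_add, hf, hg]
  | single a s =>
    show pim F A ε hε
      (MonoidAlgebra.mapDomain (MonoidHom.inr (Multiplicative (ZMod 2)) A) (MonoidAlgebra.single a s)) = _
    rw [MonoidAlgebra.mapDomain_single]
    show pim F A ε hε (MonoidAlgebra.single ((1 : Multiplicative (ZMod 2)), a) s) = _
    rw [pim_single, chi_one, mul_one]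

/-- the generator of the order-2 component -/
def tg (A : Type) [CommGroup A] : Multiplicative (ZMod 2) × A :=
  (Multiplicative.ofAdd (1 : ZMod 2), 1)

lemma tg_sq (A : Type) [CommGroup A] : tg A * tg A = 1 := by
  show (Multiplicative.ofAdd (1 : ZMod 2) * Multiplicative.ofAdd (1 : ZMod 2), (1:A) * 1) = 1
  have : Multiplicative.ofAdd (1 : ZMod 2) * Multiplicative.ofAdd (1 : ZMod 2) = 1 := by decide
  rw [this, mul_one]
  rfl

def uu (F : Type) [Field F] (A : Type) [CommGroup A] (ε : F) :
    MonoidAlgebra F (Multiplicative (ZMod 2) × A) :=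
  (2:F)⁻¹ • (1 + MonoidAlgebra.single (tg A) ε)

lemma ts_mul (F : Type) [Field F] (A : Type) [CommGroup A] (ε ε' : F) :
    MonoidAlgebra.single (tg A) ε * MonoidAlgebra.single (tg A) ε' =
      (ε * ε') • (1 : MonoidAlgebra F (Multiplicative (ZMod 2) × A)) := by
  rw [MonoidAlgebra.single_mul_single, tg_sq, MonoidAlgebra.one_def, MonoidAlgebra.smul_single',
    mul_one]

lemma smul_as_mul (F : Type) [Field F] (A : Type) [CommGroup A] (r : F)
    (z : MonoidAlgebra F (Multiplicative (ZMod 2) × A)) :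
    r • z = algebraMap F (MonoidAlgebra F (Multiplicative (ZMod 2) × A)) r * z :=
  (Algebra.smul_def r z).symm ▸ rfl

lemma uu_sq (F : Type) [Field F] (A : Type) [CommGroup A] (h2 : (2:F) ≠ 0)
    (ε : F) (hε : ε * ε = 1) : uu F A ε * uu F A ε = uu F A ε := by
  set R := MonoidAlgebra F (Multiplicative (ZMod 2) × A)
  set T := MonoidAlgebra.single (tg A) ε with hT
  set c := algebraMap F R (2:F)⁻¹ with hc
  have hTT : T * T = 1 := by
    rw [hT, ts_mul, hε, one_smul]
  have hc2 : (2:F) • c = 1 := by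
    rw [hc, Algebra.smul_def, ← map_mul, mul_inv_cancel₀ h2, map_one]
  have hc2' : c + c = 1 := by
    rw [← hc2, two_smul]
  show ((2:F)⁻¹ • ((1:R) + T)) * ((2:F)⁻¹ • ((1:R) + T)) = (2:F)⁻¹ • ((1:R) + T)
  simp only [Algebra.smul_def]
  rw [← hc]
  linear_combination (c * c) * hTT + ((1 + T) * c) * hc2'

lemma uu_orth (F : Type) [Field F] (A : Type) [CommGroup A] (h2 : (2:F) ≠ 0) :
    uu F A 1 * uu F A (-1) = 0 := by
  set R := MonoidAlgebra F (Multiplicative (ZMod 2) × A)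
  have hTT : MonoidAlgebra.single (tg A) (1:F) * MonoidAlgebra.single (tg A) (-1:F)
      = -1 := by
    rw [ts_mul]; simp
  have hneg : MonoidAlgebra.single (tg A) (-1:F)
      = -MonoidAlgebra.single (tg A) (1:F) := MonoidAlgebra.single_neg _ _
  show ((2:F)⁻¹ • ((1:R) + _)) * ((2:F)⁻¹ • ((1:R) + _)) = 0
  simp only [Algebra.smul_def]
  linear_combination (algebraMap F R 2⁻¹ * algebraMap F R 2⁻¹) * hTT +
    (algebraMap F R 2⁻¹ * algebraMap F R 2⁻¹) * hneg

lemma uu_sum (F : Type) [Field F] (A : Type) [CommGroup A] (h2 : (2:F) ≠ 0) :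
    uu F A 1 + uu F A (-1) = 1 := by
  set R := MonoidAlgebra F (Multiplicative (ZMod 2) × A)
  have hneg : MonoidAlgebra.single (tg A) (-1:F)
      = -MonoidAlgebra.single (tg A) (1:F) := MonoidAlgebra.single_neg _ _
  show (2:F)⁻¹ • ((1:R) + _) + (2:F)⁻¹ • ((1:R) + _) = 1
  rw [hneg, ← smul_add]
  have : ((1:R) + MonoidAlgebra.single (tg A) (1:F)) +
      (1 + -MonoidAlgebra.single (tg A) (1:F)) = (2:F) • 1 := by
    rw [two_smul]; ring
  rw [this, smul_smul, inv_mul_cancel₀ h2, one_smul]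


lemma pim_uu_self (F : Type) [Field F] (A : Type) [CommGroup A] (h2 : (2:F) ≠ 0)
    (ε : F) (hε : ε * ε = 1) : pim F A ε hε (uu F A ε) = 1 := by
  rw [uu, map_smul, map_add, map_one]
  have hs : pim F A ε hε (MonoidAlgebra.single (tg A) ε) = 1 := by
    show pim F A ε hε (MonoidAlgebra.single ((Multiplicative.ofAdd (1:ZMod 2)), (1:A)) ε) = _
    rw [pim_single, chi_t, hε, ← MonoidAlgebra.one_def]
  rw [hs, ← two_smul F (1 : MonoidAlgebra F A), smul_smul, inv_mul_cancel₀ h2, one_smul]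

lemma key (F : Type) [Field F] (A : Type) [CommGroup A] (ε : F) (hε : ε * ε = 1)
    (x : MonoidAlgebra F (Multiplicative (ZMod 2) × A)) :
    MonoidAlgebra.mapDomainRingHom F (MonoidHom.inr (Multiplicative (ZMod 2)) A)
        (pim F A ε hε x) * uu F A ε = x * uu F A ε := by
  induction x using MonoidAlgebra.induction_linear with
  | zero => simp
  | add f g hf hg => rw [map_add, map_add, add_mul, add_mul, hf, hg]
  | single g s =>
    obtain ⟨c, a⟩ := g
    have hmd : (MonoidAlgebra.mapDomainRingHom F (MonoidHom.inr (Multiplicative (ZMod 2)) A))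
        (MonoidAlgebra.single a (s * chi F ε hε c)) =
        MonoidAlgebra.single ((MonoidHom.inr (Multiplicative (ZMod 2)) A) a)
          (s * chi F ε hε c) :=
      MonoidAlgebra.mapDomain_single
    rw [pim_single, hmd]
    have htt : Multiplicative.ofAdd (1 : ZMod 2) * Multiplicative.ofAdd (1 : ZMod 2)
        = 1 := by decide
    have hpt0 : (MonoidHom.inr (Multiplicative (ZMod 2)) A) a
        = ((1 : Multiplicative (ZMod 2)), a) := rfl
    have hpt1 : ((1 : Multiplicative (ZMod 2)), a) * tg A
        = (Multiplicative.ofAdd (1:ZMod 2), a) := by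
      show (1 * Multiplicative.ofAdd (1:ZMod 2), a * 1) = _
      rw [one_mul, mul_one]
    have hpt2 : ((Multiplicative.ofAdd (1:ZMod 2)), a) * tg A
        = ((1 : Multiplicative (ZMod 2)), a) := by
      show (Multiplicative.ofAdd (1:ZMod 2) * Multiplicative.ofAdd (1:ZMod 2), a * 1) = _
      rw [htt, mul_one]
    have hc : ∀ z : Multiplicative (ZMod 2), z = 1 ∨ z = Multiplicative.ofAdd (1 : ZMod 2) := by
      decide
    rcases hc c with hc | hc <;> subst hc
    · rw [chi_one, mul_one, hpt0]
    · rw [chi_t, hpt0, uu, mul_smul_comm, mul_smul_comm]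
      congr 1
      rw [mul_add, mul_add, mul_one, mul_one, MonoidAlgebra.single_mul_single,
        MonoidAlgebra.single_mul_single, hpt1, hpt2, mul_assoc, hε, mul_one]
      exact add_comm _ _
end

theorem stmt7 (p n : ℕ) (hp : p.Prime) (hodd : Odd p)
    (F : Type) [Field F] [Fintype F]
    -- `A` is the `p`-Sylow subgroup: cyclic of order `pⁿ`; the full group is
    -- `G = C × A` with `C = {1, t}` of order `2`, realized as `Multiplicative (ZMod 2) × A`
    (A : Type) [CommGroup A] [Fintype A] (hA : IsCyclic A)
    (hcardA : Fintype.card A = p ^ n)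
    (hcop : Nat.Coprime (Fintype.card F) (2 * p ^ n))
    -- the order of `q = |F|` modulo `2pⁿ` is `φ(pⁿ)`
    (hord : orderOf ((Fintype.card F : ZMod (2 * p ^ n))) = Nat.totient (p ^ n))
    -- `E 0, ..., E n` are the primitive idempotents of `F A`
    (E : ℕ → MonoidAlgebra F A)
    (hEprim : ∀ i ≤ n, IsPrimIdem (E i))
    (hEorth : ∀ i ≤ n, ∀ j ≤ n, i ≠ j → E i * E j = 0)
    (hEsum : ∑ i ∈ Finset.range (n + 1), E i = 1) :
    ∀ x : MonoidAlgebra F (Multiplicative (ZMod 2) × A),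
      IsPrimIdem x ↔
        ∃ i ≤ n,
          x = (2 : F)⁻¹ •
              ((1 + MonoidAlgebra.single ((Multiplicative.ofAdd (1 : ZMod 2), 1) :
                  Multiplicative (ZMod 2) × A) (1 : F)) *
                MonoidAlgebra.mapDomainRingHom F (MonoidHom.inr (Multiplicative (ZMod 2)) A) (E i)) ∨
          x = (2 : F)⁻¹ •
              ((1 - MonoidAlgebra.single ((Multiplicative.ofAdd (1 : ZMod 2), 1) :
                  Multiplicative (ZMod 2) × A) (1 : F)) *
                MonoidAlgebra.mapDomainRingHom F (MonoidHom.inr (Multiplicative (ZMod 2)) A) (E i)) := by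
  -- ABBREVIATION
  have h2 : (2 : F) ≠ 0 := by
    intro h
    have hch : CharP F (ringChar F) := ringChar.charP F
    have hd2 : ringChar F ∣ 2 := by
      rw [← Nat.cast_ofNat (R := F) (n := 2)] at h
      exact (CharP.cast_eq_zero_iff F (ringChar F) 2).mp h
    have hdc : ringChar F ∣ Fintype.card F :=
      (CharP.cast_eq_zero_iff F (ringChar F) _).mp (FiniteField.cast_card_eq_zero F)
    have hgcd : ringChar F ∣ Nat.gcd (Fintype.card F) (2 * p ^ n) :=
      Nat.dvd_gcd hdc (hd2.trans ⟨p ^ n, rfl⟩)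
    have h1 : ringChar F ∣ 1 := hcop ▸ hgcd
    exact CharP.char_ne_one F (ringChar F) (Nat.dvd_one.mp h1)
  have hε1 : (1 : F) * 1 = 1 := one_mul 1
  have hεm : (-1 : F) * (-1 : F) = 1 := by norm_num
  intro x
  -- the embedding
  set ι := MonoidAlgebra.mapDomainRingHom F (MonoidHom.inr (Multiplicative (ZMod 2)) A) with hιdef
  -- bridge between statement form and `uu` form
  have hform1 : ∀ i, (2 : F)⁻¹ •
      ((1 + MonoidAlgebra.single ((Multiplicative.ofAdd (1 : ZMod 2), 1) :
          Multiplicative (ZMod 2) × A) (1 : F)) * ι (E i)) = uu F A 1 * ι (E i) := by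
    intro i
    rw [uu, smul_mul_assoc]
    rfl
  have hform2 : ∀ i, (2 : F)⁻¹ •
      ((1 - MonoidAlgebra.single ((Multiplicative.ofAdd (1 : ZMod 2), 1) :
          Multiplicative (ZMod 2) × A) (1 : F)) * ι (E i)) = uu F A (-1) * ι (E i) := by
    intro i
    rw [uu, smul_mul_assoc, sub_eq_add_neg, ← MonoidAlgebra.single_neg]
    rfl
  -- `pim` of the idempotents
  have hpimf : ∀ (ε : F) (hε : ε * ε = 1) (i : ℕ),
      pim F A ε hε (uu F A ε * ι (E i)) = E i := by
    intro ε hε i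
    rw [map_mul, pim_uu_self F A h2 ε hε, pim_iota, one_mul]
  have hfu : ∀ (ε : F) (hε : ε * ε = 1) (i : ℕ),
      (uu F A ε * ι (E i)) * uu F A ε = uu F A ε * ι (E i) := by
    intro ε hε i
    rw [mul_right_comm, uu_sq F A h2 ε hε]
  -- each candidate is a primitive idempotent
  have hfprim : ∀ (ε : F) (hε : ε * ε = 1), ∀ i ≤ n, IsPrimIdem (uu F A ε * ι (E i)) := by
    intro ε hε i hi
    obtain ⟨hE0, hE1, hE2⟩ := hEprim i hi
    refine ⟨?_, ?_, ?_⟩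
    · intro h0
      apply hE0
      have h := hpimf ε hε i
      rw [h0, map_zero] at h
      exact h.symm
    · rw [mul_mul_mul_comm, uu_sq F A h2 ε hε, ← map_mul, hE1]
    · intro a b ha hb hab hba heq
      have haf : a * (uu F A ε * ι (E i)) = a := by
        calc a * (uu F A ε * ι (E i)) = a * (a + b) := by rw [← heq]
        _ = a * a + a * b := mul_add _ _ _
        _ = a := by rw [ha, hab, add_zero]
      have hbf : b * (uu F A ε * ι (E i)) = b := by
        calc b * (uu F A ε * ι (E i)) = b * (a + b) := by rw [← heq]
        _ = b * a + b * b := mul_add _ _ _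
        _ = b := by rw [hb, hba, zero_add]
      have hau : a * uu F A ε = a := by
        calc a * uu F A ε = (a * (uu F A ε * ι (E i))) * uu F A ε := by rw [haf]
        _ = a * ((uu F A ε * ι (E i)) * uu F A ε) := mul_assoc _ _ _
        _ = a * (uu F A ε * ι (E i)) := by rw [hfu ε hε i]
        _ = a := haf
      have hbu : b * uu F A ε = b := by
        calc b * uu F A ε = (b * (uu F A ε * ι (E i))) * uu F A ε := by rw [hbf]
        _ = b * ((uu F A ε * ι (E i)) * uu F A ε) := mul_assoc _ _ _
        _ = b * (uu F A ε * ι (E i)) := by rw [hfu ε hε i]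
        _ = b := hbf
      have hpeq : E i = pim F A ε hε a + pim F A ε hε b := by
        rw [← map_add, ← heq, hpimf ε hε i]
      rcases hE2 (pim F A ε hε a) (pim F A ε hε b)
          (by rw [← map_mul, ha]) (by rw [← map_mul, hb])
          (by rw [← map_mul, hab, map_zero]) (by rw [← map_mul, hba, map_zero]) hpeq with h | h
      · left
        have hk := key F A ε hε a
        rw [h, map_zero, zero_mul, hau] at hk
        exact hk.symm
      · right
        have hk := key F A ε hε b
        rw [h, map_zero, zero_mul, hbu] at hk
        exact hk.symm
  constructor
  · -- forward direction
    intro hx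
    -- step 1: split along the two `uu`s
    have hdecomp : x = x * uu F A 1 + x * uu F A (-1) := by
      rw [← mul_add, uu_sum F A h2, mul_one]
    have hid1 : (x * uu F A 1) * (x * uu F A 1) = x * uu F A 1 := by
      rw [mul_mul_mul_comm, hx.2.1, uu_sq F A h2 1 hε1]
    have hidm : (x * uu F A (-1)) * (x * uu F A (-1)) = x * uu F A (-1) := by
      rw [mul_mul_mul_comm, hx.2.1, uu_sq F A h2 (-1) hεm]
    have horth1 : (x * uu F A 1) * (x * uu F A (-1)) = 0 := by
      rw [mul_mul_mul_comm, hx.2.1, uu_orth F A h2, mul_zero]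
    have horth2 : (x * uu F A (-1)) * (x * uu F A 1) = 0 := by
      rw [mul_mul_mul_comm, hx.2.1, mul_comm (uu F A (-1)), uu_orth F A h2, mul_zero]
    have hstep1 : ∃ ε : F, ε * ε = 1 ∧ (ε = 1 ∨ ε = -1) ∧ x = x * uu F A ε := by
      rcases hx.2.2 _ _ hid1 hidm horth1 horth2 hdecomp with h | h
      · exact ⟨-1, hεm, Or.inr rfl, by
          rw [hdecomp, h, zero_add, mul_assoc, uu_sq F A h2 (-1) hεm]⟩
      · exact ⟨1, hε1, Or.inl rfl, by
          rw [hdecomp, h, add_zero, mul_assoc, uu_sq F A h2 1 hε1]⟩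
    obtain ⟨ε, hε, hside, hxu⟩ := hstep1
    -- step 2: select the component in `A`-direction
    have hsum2 : x = ∑ i ∈ Finset.range (n + 1), x * ι (E i) := by
      rw [← Finset.mul_sum, ← map_sum, hEsum, map_one, mul_one]
    have hkey := keyA x hx (Finset.range (n + 1)) (fun i => x * ι (E i))
      (fun j hj => by
        rw [mul_mul_mul_comm, hx.2.1, ← map_mul,
          (hEprim j (Nat.lt_succ_iff.mp (Finset.mem_range.mp hj))).2.1])
      (fun i hi j hj hij => by
        rw [mul_mul_mul_comm, hx.2.1, ← map_mul,
          hEorth i (Nat.lt_succ_iff.mp (Finset.mem_range.mp hi))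
            j (Nat.lt_succ_iff.mp (Finset.mem_range.mp hj)) hij, map_zero, mul_zero])
      hsum2
    obtain ⟨i, hiS, hxE0⟩ := hkey
    have hin : i ≤ n := Nat.lt_succ_iff.mp (Finset.mem_range.mp hiS)
    have hxE : x = x * ι (E i) := hxE0
    -- combine
    have hxf : x = x * (uu F A ε * ι (E i)) := by
      calc x = x * uu F A ε := hxu
      _ = (x * ι (E i)) * uu F A ε := by rw [← hxE]
      _ = x * (uu F A ε * ι (E i)) := by ring
    have hfp := hfprim ε hε i hin
    have hxf' : x * (uu F A ε * ι (E i)) = x := hxf.symm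
    have hzer : x * ((uu F A ε * ι (E i)) - x) = 0 := by
      rw [mul_sub, hxf', hx.2.1, sub_self]
    have hzer' : ((uu F A ε * ι (E i)) - x) * x = 0 := by rw [mul_comm]; exact hzer
    have hidem2 : ((uu F A ε * ι (E i)) - x) * ((uu F A ε * ι (E i)) - x)
        = (uu F A ε * ι (E i)) - x := by
      linear_combination hfp.2.1 + hx.2.1 - 2 * hxf'
    rcases hfp.2.2 x ((uu F A ε * ι (E i)) - x) hx.2.1 hidem2 hzer hzer' (by ring) with h | h
    · exact absurd h hx.1
    · have hxeq : x = uu F A ε * ι (E i) := by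
        have := sub_eq_zero.mp h
        exact this.symm
      refine ⟨i, hin, ?_⟩
      rcases hside with hs | hs
      · left; rw [hform1 i, ← hs]; exact hxeq
      · right; rw [hform2 i, ← hs]; exact hxeq
  · -- reverse direction
    rintro ⟨i, hi, h | h⟩
    · rw [hform1 i] at h
      rw [h]
      exact hfprim 1 hε1 i hi
    · rw [hform2 i] at h
      rw [h]
      exact hfprim (-1) hεm i hi
end

section
/- Let G be a finite abelian group and F_q a field with char(F_q) ∤ |G|. For each primitive idempotent e ∈ F_q G with e ≠ Ĝ, there exists a unique co-cyclic subgroup H of G such that e·e_H = e; moreover e·e_K = 0 for every other co-cyclic subgroup K ≠ H. -/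
open scoped Classical

/-- The `p`-primary (Sylow) component of a commutative group `G`:
the subgroup of elements of `p`-power order. -/
def pComp (G : Type) [CommGroup G] (p : ℕ) : Subgroup G where
  carrier := {x | ∃ n : ℕ, x ^ p ^ n = 1}
  one_mem' := ⟨0, one_pow _⟩
  mul_mem' := by
    rintro a b ⟨m, hm⟩ ⟨k, hk⟩
    refine ⟨m + k, ?_⟩
    have ha : a ^ p ^ (m + k) = 1 := by rw [pow_add, pow_mul, hm, one_pow]
    have hb : b ^ p ^ (m + k) = 1 := by rw [add_comm, pow_add, pow_mul, hk, one_pow]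
    rw [mul_pow, ha, hb, one_mul]
  inv_mem' := by rintro a ⟨m, hm⟩; exact ⟨m, by rw [inv_pow, hm, inv_one]⟩

/-- `H` is a co-cyclic subgroup of `G`: the quotient `G/H` is a nontrivial cyclic group. -/
def Cocyclic {G : Type} [CommGroup G] (H : Subgroup G) : Prop :=
  IsCyclic (G ⧸ H) ∧ Nontrivial (G ⧸ H)

/-- `K` is a co-cyclic subgroup of the subgroup `A`. -/
def CocyclicIn {G : Type} [CommGroup G] (K A : Subgroup G) : Prop :=
  K ≤ A ∧ IsCyclic (↥A ⧸ K.subgroupOf A) ∧ Nontrivial (↥A ⧸ K.subgroupOf A)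

/-- `sharp` assigns to each co-cyclic subgroup `K` of a Sylow subgroup `G_p` the unique
subgroup `K♯` with `K ≤ K♯ ≤ G_p` and `[K♯ : K] = p`. -/
def IsSharp {G : Type} [CommGroup G] [Fintype G] (sharp : Subgroup G → Subgroup G) : Prop :=
  ∀ p ∈ (Fintype.card G).primeFactors, ∀ K : Subgroup G, CocyclicIn K (pComp G p) →
    (K ≤ sharp K ∧ sharp K ≤ pComp G p ∧ K.relIndex (sharp K) = p) ∧
    ∀ L : Subgroup G, K ≤ L → L ≤ pComp G p → K.relIndex L = p → L = sharp K

/-- The idempotent `e_H` associated to a co-cyclic subgroup `H` of a finite abelian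
group `G`: the product over the primes `p` dividing `|G|` of `Ĝ_p` (if `H_p = G_p`) or
`Ĥ_p − Ĥ_p♯` (otherwise), where `H_p = H ∩ G_p` is the `p`-Sylow component of `H`. -/
noncomputable def eH (F : Type) [Field F] {G : Type} [CommGroup G] [Fintype G]
    (sharp : Subgroup G → Subgroup G) (H : Subgroup G) : MonoidAlgebra F G :=
  ∏ p ∈ (Fintype.card G).primeFactors,
    if pComp G p ⊓ H = pComp G p then hat F (pComp G p)
    else hat F (pComp G p ⊓ H) - hat F (sharp (pComp G p ⊓ H))

set_option linter.unusedSectionVars false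
set_option maxHeartbeats 1000000

section Aux
variable {F : Type} [Field F] {G : Type} [CommGroup G] [Fintype G]

noncomputable def charEv (φ : G →* (AlgebraicClosure F)ˣ) :
    MonoidAlgebra F G →+* AlgebraicClosure F :=
  MonoidAlgebra.liftNCRingHom (algebraMap F (AlgebraicClosure F))
    ((Units.coeHom _).comp φ) (fun _ _ => Commute.all _ _)

lemma charEv_single (φ : G →* (AlgebraicClosure F)ˣ) (g : G) (c : F) :
    charEv φ (MonoidAlgebra.single g c)
      = algebraMap F (AlgebraicClosure F) c * (φ g : AlgebraicClosure F) := by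
  simp [charEv, MonoidAlgebra.liftNCRingHom]

lemma charEv_apply (φ : G →* (AlgebraicClosure F)ˣ) (x : MonoidAlgebra F G) :
    charEv φ x = ∑ g : G, algebraMap F (AlgebraicClosure F) (x.coeff g) * (φ g : AlgebraicClosure F) := by
  conv_lhs => rw [← MonoidAlgebra.sum_single x]
  rw [Finsupp.sum, map_sum, Finset.sum_subset (Finset.subset_univ x.coeff.support)]
  · exact Finset.sum_congr rfl fun g _ => charEv_single φ g (x.coeff g)
  · intro g _ hg
    simp [Finsupp.notMem_support_iff.mp hg]

variable (F) in
lemma cast_ne_zero_of_dvd (hchar : ¬ (ringChar F ∣ Fintype.card G)) {m : ℕ}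
    (hm : m ∣ Fintype.card G) : (m : AlgebraicClosure F) ≠ 0 := by
  have h1 : (m : F) ≠ 0 := by
    intro h
    exact hchar (dvd_trans ((CharP.cast_eq_zero_iff F (ringChar F) m).mp h) hm)
  rw [show ((m : AlgebraicClosure F)) = algebraMap F (AlgebraicClosure F) (m : F) by
    simp]
  exact fun h => h1 ((algebraMap F (AlgebraicClosure F)).injective (by simpa using h))

variable (F G) in
lemma hasEnough (hchar : ¬ (ringChar F ∣ Fintype.card G)) :
    HasEnoughRootsOfUnity (AlgebraicClosure F) (Monoid.exponent G) := by
  have h1 : Monoid.exponent G ∣ Fintype.card G := Group.exponent_dvd_card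
  haveI : NeZero ((Monoid.exponent G : AlgebraicClosure F)) :=
    ⟨cast_ne_zero_of_dvd F hchar h1⟩
  infer_instance

/-- Sum of a character over the elements of a subgroup. -/
lemma charSum_subgroup (K : Subgroup G) (φ : G →* (AlgebraicClosure F)ˣ) :
    ∑ h ∈ (K : Set G).toFinset, ((φ h : (AlgebraicClosure F)ˣ) : AlgebraicClosure F)
      = if K ≤ φ.ker then (Nat.card K : AlgebraicClosure F) else 0 := by
  split_ifs with hK
  · have h1 : ∀ h ∈ (K : Set G).toFinset,
        ((φ h : (AlgebraicClosure F)ˣ) : AlgebraicClosure F) = 1 := by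
      intro h hh
      have : h ∈ K := by simpa using hh
      have h2 := hK this
      rw [MonoidHom.mem_ker] at h2
      rw [h2, Units.val_one]
    rw [Finset.sum_congr rfl h1, Finset.sum_const, nsmul_eq_mul, mul_one, Set.toFinset_card,
      Nat.card_eq_fintype_card]
    norm_cast
  · obtain ⟨k₀, hk₀K, hk₀⟩ : ∃ k₀ ∈ K, φ k₀ ≠ 1 := by
      by_contra h
      push_neg at h
      exact hK fun k hk => MonoidHom.mem_ker.mpr (h k hk)
    have key : ∑ h ∈ (K : Set G).toFinset, ((φ h : (AlgebraicClosure F)ˣ) : AlgebraicClosure F)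
        = (φ k₀ : AlgebraicClosure F) *
          ∑ h ∈ (K : Set G).toFinset, ((φ h : (AlgebraicClosure F)ˣ) : AlgebraicClosure F) := by
      rw [Finset.mul_sum]
      refine Finset.sum_nbij' (fun h => k₀⁻¹ * h) (fun h => k₀ * h) ?_ ?_ ?_ ?_ ?_
      · intro a ha; simp only [Set.mem_toFinset] at *; exact mul_mem (inv_mem hk₀K) ha
      · intro a ha; simp only [Set.mem_toFinset] at *; exact mul_mem hk₀K ha
      · intro a _; group
      · intro a _; group
      · intro a _
        rw [← Units.val_mul, ← map_mul, mul_inv_cancel_left]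
    have : (1 - (φ k₀ : AlgebraicClosure F)) *
        ∑ h ∈ (K : Set G).toFinset, ((φ h : (AlgebraicClosure F)ˣ) : AlgebraicClosure F) = 0 := by
      rw [sub_mul, one_mul, ← key, sub_self]
    rcases mul_eq_zero.mp this with h | h
    · exfalso
      apply hk₀
      have : (φ k₀ : AlgebraicClosure F) = 1 := by linear_combination -h
      exact Units.ext this
    · exact h


lemma charEv_smul (φ : G →* (AlgebraicClosure F)ˣ) (c : F) (x : MonoidAlgebra F G) :
    charEv φ (c • x) = algebraMap F (AlgebraicClosure F) c * charEv φ x := by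
  rw [Algebra.smul_def, map_mul]
  congr 1
  rw [MonoidAlgebra.coe_algebraMap]
  show charEv φ (MonoidAlgebra.single 1 c) = _
  rw [charEv_single, map_one, Units.val_one, mul_one]

lemma charEv_hat (hchar : ¬ (ringChar F ∣ Fintype.card G)) (K : Subgroup G)
    (φ : G →* (AlgebraicClosure F)ˣ) :
    charEv φ (hat F K) = if K ≤ φ.ker then 1 else 0 := by
  rw [hat, charEv_smul, map_sum]
  have h1 : ∀ h ∈ (K : Set G).toFinset,
      charEv φ (MonoidAlgebra.single h (1 : F))
        = ((φ h : (AlgebraicClosure F)ˣ) : AlgebraicClosure F) := by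
    intro h _
    rw [charEv_single, map_one, one_mul]
  rw [Finset.sum_congr rfl h1, charSum_subgroup, map_inv₀, map_natCast]
  have hcard : ((Nat.card K : AlgebraicClosure F)) ≠ 0 := by
    apply cast_ne_zero_of_dvd F hchar
    simpa [Nat.card_eq_fintype_card] using Subgroup.card_subgroup_dvd_card K
  split_ifs with h
  · exact inv_mul_cancel₀ hcard
  · rw [mul_zero]

lemma charSum_dual (hchar : ¬ (ringChar F ∣ Fintype.card G))
    [Fintype (G →* (AlgebraicClosure F)ˣ)] (g : G) :
    ∑ φ : G →* (AlgebraicClosure F)ˣ, ((φ g : (AlgebraicClosure F)ˣ) : AlgebraicClosure F)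
      = if g = 1 then (Fintype.card G : AlgebraicClosure F) else 0 := by
  haveI := hasEnough F G hchar
  split_ifs with h
  · subst h
    simp only [map_one, Units.val_one]
    rw [Finset.sum_const, nsmul_eq_mul, mul_one, Finset.card_univ]
    exact_mod_cast congrArg (Nat.cast : ℕ → AlgebraicClosure F) (Fintype.card_congr
      (CommGroup.monoidHom_mulEquiv_of_hasEnoughRootsOfUnity G (AlgebraicClosure F)).some.toEquiv)
  · obtain ⟨ψ, hψ⟩ :=
      CommGroup.exists_apply_ne_one_of_hasEnoughRootsOfUnity G (AlgebraicClosure F) h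
    have key : ∑ φ : G →* (AlgebraicClosure F)ˣ,
        ((φ g : (AlgebraicClosure F)ˣ) : AlgebraicClosure F)
        = (ψ g : AlgebraicClosure F) * ∑ φ : G →* (AlgebraicClosure F)ˣ,
          ((φ g : (AlgebraicClosure F)ˣ) : AlgebraicClosure F) := by
      rw [Finset.mul_sum]
      refine Fintype.sum_equiv (Equiv.mulLeft ψ⁻¹) _ _ fun φ => ?_
      show ((φ g : (AlgebraicClosure F)ˣ) : AlgebraicClosure F)
        = (ψ g : AlgebraicClosure F) * (((ψ⁻¹ * φ) g : (AlgebraicClosure F)ˣ) : AlgebraicClosure F)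
      rw [MonoidHom.mul_apply, MonoidHom.inv_apply, Units.val_mul, ← mul_assoc,
        ← Units.val_mul, mul_inv_cancel, Units.val_one, one_mul]
    have h2 : (1 - (ψ g : AlgebraicClosure F)) * ∑ φ : G →* (AlgebraicClosure F)ˣ,
        ((φ g : (AlgebraicClosure F)ˣ) : AlgebraicClosure F) = 0 := by
      rw [sub_mul, one_mul, ← key, sub_self]
    rcases mul_eq_zero.mp h2 with h3 | h3
    · exact absurd (Units.val_eq_one.mp (by linear_combination -h3)) hψ
    · exact h3

lemma charEv_injective (hchar : ¬ (ringChar F ∣ Fintype.card G)) {x y : MonoidAlgebra F G}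
    (h : ∀ φ : G →* (AlgebraicClosure F)ˣ, charEv φ x = charEv φ y) : x = y := by
  haveI := hasEnough F G hchar
  haveI : Fintype (G →* (AlgebraicClosure F)ˣ) :=
    Fintype.ofEquiv G
      (CommGroup.monoidHom_mulEquiv_of_hasEnoughRootsOfUnity G
        (AlgebraicClosure F)).some.symm.toEquiv
  have key : ∀ z : MonoidAlgebra F G, ∀ g : G,
      ∑ φ : G →* (AlgebraicClosure F)ˣ,
        ((φ g⁻¹ : (AlgebraicClosure F)ˣ) : AlgebraicClosure F) * charEv φ z
      = algebraMap F (AlgebraicClosure F) (z.coeff g) * (Fintype.card G : AlgebraicClosure F) := by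
    intro z g
    have h1 : ∀ φ : G →* (AlgebraicClosure F)ˣ,
        ((φ g⁻¹ : (AlgebraicClosure F)ˣ) : AlgebraicClosure F) * charEv φ z
        = ∑ h : G, algebraMap F (AlgebraicClosure F) (z.coeff h) *
            ((φ (g⁻¹ * h) : (AlgebraicClosure F)ˣ) : AlgebraicClosure F) := by
      intro φ
      rw [charEv_apply, Finset.mul_sum]
      refine Finset.sum_congr rfl fun h _ => ?_
      rw [map_mul, Units.val_mul]
      ring
    rw [Finset.sum_congr rfl fun φ _ => h1 φ, Finset.sum_comm]
    have h2 : ∀ h : G,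
        ∑ φ : G →* (AlgebraicClosure F)ˣ, algebraMap F (AlgebraicClosure F) (z.coeff h) *
            ((φ (g⁻¹ * h) : (AlgebraicClosure F)ˣ) : AlgebraicClosure F)
        = algebraMap F (AlgebraicClosure F) (z.coeff h) *
            (if g⁻¹ * h = 1 then (Fintype.card G : AlgebraicClosure F) else 0) := by
      intro h
      rw [← Finset.mul_sum, charSum_dual hchar]
    rw [Finset.sum_congr rfl fun h _ => h2 h]
    have h3 : ∀ h : G, algebraMap F (AlgebraicClosure F) (z.coeff h) *
        (if g⁻¹ * h = 1 then (Fintype.card G : AlgebraicClosure F) else 0)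
        = if g = h then algebraMap F (AlgebraicClosure F) (z.coeff h) *
            (Fintype.card G : AlgebraicClosure F) else 0 := by
      intro h
      rw [mul_ite, mul_zero]
      congr 1
      rw [eq_iff_iff, inv_mul_eq_one]
    rw [Finset.sum_congr rfl fun h _ => h3 h, Finset.sum_ite_eq, if_pos (Finset.mem_univ g)]
  have hcard : ((Fintype.card G : AlgebraicClosure F)) ≠ 0 :=
    cast_ne_zero_of_dvd F hchar dvd_rfl
  ext g
  have := (key x g).symm.trans ((Finset.sum_congr rfl fun φ _ => by rw [h φ]).trans (key y g))
  have := mul_right_cancel₀ hcard this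
  exact (algebraMap F (AlgebraicClosure F)).injective this

end Aux

section GT
variable {G : Type} [CommGroup G] [Fintype G]

lemma le_of_pComp_inf_eq {H K : Subgroup G}
    (h : ∀ p ∈ (Fintype.card G).primeFactors, pComp G p ⊓ H = pComp G p ⊓ K) : H ≤ K := by
  have main : ∀ n : ℕ, ∀ x : G, x ∈ H → orderOf x = n → x ∈ K := by
    intro n
    induction n using Nat.strong_induction_on with
    | _ n ih =>
      intro x hx hord
      rcases eq_or_ne n 1 with h1 | h1
      · have : orderOf x = 1 := hord.trans h1
        rw [orderOf_eq_one_iff.mp this]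
        exact one_mem K
      have hn0 : n ≠ 0 := by
        rw [← hord]
        exact (orderOf_pos x).ne'
      set p := n.minFac with hpdef
      have hp : p.Prime := Nat.minFac_prime h1
      have hpn : p ∣ n := Nat.minFac_dvd n
      set k := n.factorization p with hkdef
      set m := ordCompl[p] n with hmdef
      have hfac : p ^ k * m = n := Nat.ordProj_mul_ordCompl_eq_self n p
      have hm0 : 0 < m := Nat.ordCompl_pos p hn0
      have hmn : m < n := by
        have hk1 : 1 ≤ k := (Nat.Prime.dvd_iff_one_le_factorization hp hn0).mp hpn
        have h2 : 2 ≤ p ^ k := by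
          calc 2 ≤ p := hp.two_le
          _ = p ^ 1 := (pow_one p).symm
          _ ≤ p ^ k := Nat.pow_le_pow_right hp.pos hk1
        nlinarith [hfac, hm0]
      have hcop : Nat.Coprime (p ^ k) m := (Nat.coprime_ordCompl hp hn0).pow_left k
      -- Bezout
      have hbez : ∃ a b : ℤ, (p ^ k : ℤ) * a + (m : ℤ) * b = 1 := by
        refine ⟨Nat.gcdA (p ^ k) m, Nat.gcdB (p ^ k) m, ?_⟩
        have := Nat.gcd_eq_gcd_ab (p ^ k) m
        rw [hcop] at this
        push_cast at this
        linarith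
      obtain ⟨a, b, hab⟩ := hbez
      set u := x ^ ((m : ℤ) * b) with hu
      set v := x ^ ((p ^ k : ℤ) * a) with hv
      have hxn : x ^ (n : ℤ) = 1 := by
        rw [zpow_natCast, ← hord, pow_orderOf_eq_one]
      have hxvu : x = v * u := by
        rw [hu, hv, ← zpow_add, show (p ^ k : ℤ) * a + (m : ℤ) * b = 1 from hab, zpow_one]
      have hpf : p ∈ (Fintype.card G).primeFactors := by
        refine Nat.mem_primeFactors.mpr ⟨hp, ?_, Fintype.card_ne_zero⟩
        exact dvd_trans hpn (hord ▸ orderOf_dvd_card)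
      have hu_pComp : u ∈ pComp G p := by
        refine ⟨k, ?_⟩
        rw [hu, ← zpow_natCast, ← zpow_mul]
        have heq : (m : ℤ) * b * ((p ^ k : ℕ) : ℤ) = (n : ℤ) * b := by
          push_cast [← hfac]
          ring
        rw [heq, zpow_mul, hxn, one_zpow]
      have hu_H : u ∈ H := zpow_mem hx _
      have hu_K : u ∈ K := by
        have : u ∈ pComp G p ⊓ K := (h p hpf) ▸ (Subgroup.mem_inf.mpr ⟨hu_pComp, hu_H⟩)
        exact this.2
      have hv_H : v ∈ H := zpow_mem hx _
      have hv_ord : orderOf v ∣ m := by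
        apply orderOf_dvd_of_pow_eq_one
        rw [hv, ← zpow_natCast, ← zpow_mul]
        have heq : (p : ℤ) ^ k * a * (m : ℤ) = (n : ℤ) * a := by
          push_cast [← hfac]
          ring
        rw [heq, zpow_mul, hxn, one_zpow]
      have hv_K : v ∈ K := by
        refine ih (orderOf v) ?_ v hv_H rfl
        calc orderOf v ≤ m := Nat.le_of_dvd hm0 hv_ord
        _ < n := hmn
      rw [hxvu]
      exact mul_mem hv_K hu_K
  intro x hx
  exact main (orderOf x) x hx rfl

lemma eq_of_pComp_inf_eq {H K : Subgroup G}
    (h : ∀ p ∈ (Fintype.card G).primeFactors, pComp G p ⊓ H = pComp G p ⊓ K) : H = K :=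
  le_antisymm (le_of_pComp_inf_eq h) (le_of_pComp_inf_eq fun p hp => (h p hp).symm)

lemma sharp_le_s9 {sharp : Subgroup G → Subgroup G} (hsharp : IsSharp sharp) {p : ℕ}
    (hp : p ∈ (Fintype.card G).primeFactors) {K L : Subgroup G} (hK : CocyclicIn K (pComp G p))
    (hKL : K ≤ L) (hL : L ≤ pComp G p) (hne : K ≠ L) : sharp K ≤ L := by
  have hpp : p.Prime := Nat.prime_of_mem_primeFactors hp
  obtain ⟨x, hxL, hxK⟩ := SetLike.exists_of_lt (lt_of_le_of_ne hKL hne)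
  obtain ⟨n, hxn⟩ := hL hxL
  set q := QuotientGroup.mk' K with hq
  have hxq : q x ≠ 1 := by
    rw [hq]
    simp only [QuotientGroup.mk'_apply, ne_eq, QuotientGroup.eq_one_iff]
    exact hxK
  have hdvd : orderOf (q x) ∣ p ^ n := by
    apply orderOf_dvd_of_pow_eq_one
    rw [← map_pow, hxn, map_one]
  obtain ⟨t, htn, hord⟩ := (Nat.dvd_prime_pow hpp).mp hdvd
  have ht1 : 1 ≤ t := by
    rcases Nat.eq_zero_or_pos t with h0 | h0
    · exfalso
      apply hxq
      rw [← orderOf_eq_one_iff, hord, h0, pow_zero]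
    · exact h0
  set z := x ^ p ^ (t - 1) with hz
  have hzL : z ∈ L := pow_mem hxL _
  have hordz : orderOf (q z) = p := by
    rw [hz, map_pow, orderOf_pow, hord]
    have hdvd2 : p ^ (t - 1) ∣ p ^ t := pow_dvd_pow p (Nat.sub_le t 1)
    rw [Nat.gcd_eq_right hdvd2, Nat.pow_div (Nat.sub_le t 1) hpp.pos,
      show t - (t - 1) = 1 by omega, pow_one]
  set M := K ⊔ Subgroup.zpowers z with hM
  have hML : M ≤ L := sup_le hKL ((Subgroup.zpowers_le).mpr hzL)
  have hrel : K.relIndex M = p := by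
    have hcard : Nat.card (↥M ⧸ K.subgroupOf M) = p := by
      set f := q.comp M.subtype with hf
      have hker : f.ker = K.subgroupOf M := by
        rw [hf, ← MonoidHom.comap_ker, hq, QuotientGroup.ker_mk']
        rfl
      have hrange : f.range = Subgroup.zpowers (q z) := by
        rw [hf, MonoidHom.range_comp, Subgroup.range_subtype, hM, Subgroup.map_sup,
          hq, QuotientGroup.map_mk'_self, MonoidHom.map_zpowers, bot_sup_eq]
      calc Nat.card (↥M ⧸ K.subgroupOf M) = Nat.card (↥M ⧸ f.ker) := by rw [hker]
      _ = Nat.card f.range := Nat.card_congr (QuotientGroup.quotientKerEquivRange f).toEquiv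
      _ = Nat.card (Subgroup.zpowers (q z)) := by rw [hrange]
      _ = orderOf (q z) := Nat.card_zpowers _
      _ = p := hordz
    exact hcard
  have := (hsharp p hp K hK).2 M le_sup_left (le_trans hML hL) hrel
  rw [← this]
  exact hML

lemma sharp_ne {sharp : Subgroup G → Subgroup G} (hsharp : IsSharp sharp) {p : ℕ}
    (hp : p ∈ (Fintype.card G).primeFactors) {K : Subgroup G} (hK : CocyclicIn K (pComp G p)) :
    K ≠ sharp K := by
  intro h
  have h1 := (hsharp p hp K hK).1.2.2
  rw [← h, Subgroup.relIndex_self] at h1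
  exact (Nat.prime_of_mem_primeFactors hp).one_lt.ne' h1.symm

lemma cocyclicIn_of_cocyclic {H : Subgroup G} (hH : Cocyclic H) {p : ℕ}
    (hne : pComp G p ⊓ H ≠ pComp G p) : CocyclicIn (pComp G p ⊓ H) (pComp G p) := by
  haveI := hH.1
  refine ⟨inf_le_left, ?_, ?_⟩
  · set f := (QuotientGroup.mk' H).comp (pComp G p).subtype with hf
    have hker : f.ker = (pComp G p ⊓ H).subgroupOf (pComp G p) := by
      rw [hf, ← MonoidHom.comap_ker, QuotientGroup.ker_mk', Subgroup.inf_subgroupOf_left]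
      rfl
    have : IsCyclic f.range := Subgroup.isCyclic _
    have e := (QuotientGroup.quotientMulEquivOfEq hker).symm.trans
      (QuotientGroup.quotientKerEquivRange f)
    exact isCyclic_of_surjective e.symm e.symm.surjective
  · have hlt : pComp G p ⊓ H < pComp G p := lt_of_le_of_ne inf_le_left hne
    obtain ⟨x, hxG, hxH⟩ := SetLike.exists_of_lt hlt
    refine ⟨QuotientGroup.mk ⟨x, hxG⟩, 1, ?_⟩
    rw [ne_eq, QuotientGroup.eq_one_iff]
    intro hmem
    exact hxH (by exact hmem)
end GT

section EV
variable {F : Type} [Field F] {G : Type} [CommGroup G] [Fintype G]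

lemma cocyclic_of_ne_one (φ : G →* (AlgebraicClosure F)ˣ) (hφ : φ.ker ≠ ⊤) :
    Cocyclic φ.ker := by
  constructor
  · haveI : Finite ↥φ.range := Finite.of_surjective _ φ.rangeRestrict_surjective
    haveI : IsCyclic ↥φ.range := subgroup_units_cyclic _
    exact isCyclic_of_surjective (QuotientGroup.quotientKerEquivRange φ).symm
      (QuotientGroup.quotientKerEquivRange φ).symm.surjective
  · obtain ⟨g, hg⟩ : ∃ g : G, g ∉ φ.ker := by
      by_contra h
      push_neg at h
      exact hφ ((Subgroup.eq_top_iff' _).mpr h)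
    exact ⟨QuotientGroup.mk g, 1, by rwa [ne_eq, QuotientGroup.eq_one_iff]⟩

lemma cocyclic_ne_top {H : Subgroup G} (hH : Cocyclic H) : H ≠ ⊤ := by
  intro h
  subst h
  haveI := hH.2
  haveI := QuotientGroup.subsingleton_quotient_top (G := G)
  exact false_of_nontrivial_of_subsingleton (G ⧸ (⊤ : Subgroup G))

lemma charEv_eH (hchar : ¬ (ringChar F ∣ Fintype.card G)) {sharp : Subgroup G → Subgroup G}
    (hsharp : IsSharp sharp) {H : Subgroup G} (hH : Cocyclic H)
    (φ : G →* (AlgebraicClosure F)ˣ) :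
    charEv φ (eH F sharp H) = if φ.ker = H then 1 else 0 := by
  rw [eH, map_prod]
  have hterm : ∀ p ∈ (Fintype.card G).primeFactors,
      charEv φ (if pComp G p ⊓ H = pComp G p then hat F (pComp G p)
        else hat F (pComp G p ⊓ H) - hat F (sharp (pComp G p ⊓ H)))
      = if pComp G p ⊓ H = pComp G p ⊓ φ.ker then 1 else 0 := by
    intro p hp
    split_ifs with hc hd hd
    · -- H_p = G_p and H_p = Ker_p : need G_p ≤ ker
      rw [charEv_hat hchar, if_pos]
      rw [← inf_eq_left, ← hd, hc]
    · -- H_p = G_p, H_p ≠ Ker_p : need ¬ G_p ≤ ker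
      rw [charEv_hat hchar, if_neg]
      intro hle
      exact hd (by rw [hc, inf_eq_left.mpr hle])
    · -- H_p ≠ G_p, H_p = Ker_p : value 1
      have hKc : CocyclicIn (pComp G p ⊓ H) (pComp G p) := cocyclicIn_of_cocyclic hH hc
      rw [map_sub, charEv_hat hchar, charEv_hat hchar, if_pos, if_neg, sub_zero]
      · intro hle
        have h1 : sharp (pComp G p ⊓ H) ≤ pComp G p ⊓ φ.ker :=
          le_inf ((hsharp p hp _ hKc).1.2.1) hle
        rw [← hd] at h1
        exact sharp_ne hsharp hp hKc (le_antisymm ((hsharp p hp _ hKc).1.1) h1)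
      · exact le_trans (le_of_eq hd) inf_le_right
    · -- H_p ≠ G_p, H_p ≠ Ker_p : value 0
      have hKc : CocyclicIn (pComp G p ⊓ H) (pComp G p) := cocyclicIn_of_cocyclic hH hc
      rw [map_sub, charEv_hat hchar, charEv_hat hchar]
      by_cases hle : pComp G p ⊓ H ≤ φ.ker
      · rw [if_pos hle, if_pos, sub_self]
        have hlt : pComp G p ⊓ H ≤ pComp G p ⊓ φ.ker := le_inf inf_le_left hle
        exact le_trans (sharp_le_s9 hsharp hp hKc hlt inf_le_left hd) inf_le_right
      · rw [if_neg hle, if_neg, sub_self]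
        intro h1
        exact hle (le_trans ((hsharp p hp _ hKc).1.1) h1)
  rw [Finset.prod_congr rfl hterm]
  by_cases hk : φ.ker = H
  · rw [if_pos hk]
    apply Finset.prod_eq_one
    intro p hp
    rw [if_pos (by rw [hk])]
  · rw [if_neg hk]
    obtain ⟨p, hp, hne⟩ : ∃ p ∈ (Fintype.card G).primeFactors,
        pComp G p ⊓ H ≠ pComp G p ⊓ φ.ker := by
      by_contra h
      push_neg at h
      exact hk (eq_of_pComp_inf_eq fun p hp => (h p hp).symm)
    exact Finset.prod_eq_zero hp (by rw [if_neg hne])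

lemma eH_idem (hchar : ¬ (ringChar F ∣ Fintype.card G)) {sharp : Subgroup G → Subgroup G}
    (hsharp : IsSharp sharp) {H : Subgroup G} (hH : Cocyclic H) :
    eH F sharp H * eH F sharp H = eH F sharp H := by
  apply charEv_injective hchar
  intro φ
  rw [map_mul, charEv_eH hchar hsharp hH]
  split_ifs <;> ring

lemma eH_orth (hchar : ¬ (ringChar F ∣ Fintype.card G)) {sharp : Subgroup G → Subgroup G}
    (hsharp : IsSharp sharp) {H K : Subgroup G} (hH : Cocyclic H) (hK : Cocyclic K)
    (hne : H ≠ K) : eH F sharp H * eH F sharp K = 0 := by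
  apply charEv_injective hchar
  intro φ
  rw [map_mul, charEv_eH hchar hsharp hH, charEv_eH hchar hsharp hK, map_zero]
  split_ifs with h1 h2
  · exact absurd (h1.symm.trans h2) hne
  all_goals ring

lemma hat_top_idem (hchar : ¬ (ringChar F ∣ Fintype.card G)) :
    hat F (⊤ : Subgroup G) * hat F (⊤ : Subgroup G) = hat F (⊤ : Subgroup G) := by
  apply charEv_injective hchar
  intro φ
  rw [map_mul, charEv_hat hchar]
  split_ifs <;> ring

lemma hat_top_orth (hchar : ¬ (ringChar F ∣ Fintype.card G)) {sharp : Subgroup G → Subgroup G}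
    (hsharp : IsSharp sharp) {H : Subgroup G} (hH : Cocyclic H) :
    hat F (⊤ : Subgroup G) * eH F sharp H = 0 := by
  apply charEv_injective hchar
  intro φ
  rw [map_mul, charEv_hat hchar, charEv_eH hchar hsharp hH, map_zero]
  split_ifs with h1 h2
  · exact absurd (h2.symm.trans (top_le_iff.mp h1)) (cocyclic_ne_top hH)
  all_goals ring

lemma eH_complete (hchar : ¬ (ringChar F ∣ Fintype.card G)) {sharp : Subgroup G → Subgroup G}
    (hsharp : IsSharp sharp) [Fintype (Subgroup G)] :
    (∑ H ∈ Finset.univ.filter (fun H : Subgroup G => Cocyclic H), eH F sharp H)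
      + hat F (⊤ : Subgroup G) = 1 := by
  apply charEv_injective hchar
  intro φ
  rw [map_add, map_sum, map_one, charEv_hat hchar]
  rw [Finset.sum_congr rfl (fun H hHmem =>
    charEv_eH hchar hsharp (Finset.mem_filter.mp hHmem).2 φ)]
  by_cases hk : φ.ker = ⊤
  · rw [if_pos (by rw [hk]), Finset.sum_eq_zero, zero_add]
    intro H hHmem
    rw [if_neg]
    intro h
    exact cocyclic_ne_top (Finset.mem_filter.mp hHmem).2 (h ▸ hk)
  · rw [if_neg (fun h => hk (top_le_iff.mp h)), add_zero]
    have hker : Cocyclic φ.ker := cocyclic_of_ne_one φ hk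
    rw [Finset.sum_ite_eq (Finset.univ.filter (fun H : Subgroup G => Cocyclic H)) φ.ker
      (fun _ => (1 : AlgebraicClosure F))]
    rw [if_pos (Finset.mem_filter.mpr ⟨Finset.mem_univ _, hker⟩)]

end EV

lemma prim_finset {R : Type} [CommRing R] {e : R} (he : IsPrimIdem e) {ι : Type}
    (s : Finset ι) (f : ι → R) (hidem : ∀ i ∈ s, f i * f i = f i)
    (horth : ∀ i ∈ s, ∀ j ∈ s, i ≠ j → f i * f j = 0)
    (hsum : e = ∑ i ∈ s, f i) : ∃ i ∈ s, e = f i := by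
  classical
  induction s using Finset.induction_on with
  | empty =>
    rw [Finset.sum_empty] at hsum
    exact absurd hsum he.1
  | insert i s hi ih =>
    rw [Finset.sum_insert hi] at hsum
    have hia : i ∈ insert i s := Finset.mem_insert_self i s
    have hbidem : (∑ j ∈ s, f j) * (∑ j ∈ s, f j) = ∑ j ∈ s, f j := by
      rw [Finset.sum_mul_sum]
      refine Finset.sum_congr rfl fun j hj => ?_
      rw [Finset.sum_eq_single j]
      · exact hidem j (Finset.mem_insert_of_mem hj)
      · intro k hk hkj
        exact horth j (Finset.mem_insert_of_mem hj) k (Finset.mem_insert_of_mem hk) hkj.symm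
      · intro hj'
        exact absurd hj hj'
    have hab : f i * (∑ j ∈ s, f j) = 0 := by
      rw [Finset.mul_sum]
      refine Finset.sum_eq_zero fun j hj => ?_
      exact horth i hia j (Finset.mem_insert_of_mem hj) (fun h => hi (h ▸ hj))
    have hba : (∑ j ∈ s, f j) * f i = 0 := by rw [mul_comm]; exact hab
    rcases he.2.2 (f i) (∑ j ∈ s, f j) (hidem i hia) hbidem hab hba hsum with h | h
    · obtain ⟨j, hj, hej⟩ := ih (fun j hj => hidem j (Finset.mem_insert_of_mem hj))
        (fun j hj k hk => horth j (Finset.mem_insert_of_mem hj) k (Finset.mem_insert_of_mem hk))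
        (by rw [hsum, h, zero_add])
      exact ⟨j, Finset.mem_insert_of_mem hj, hej⟩
    · exact ⟨i, hia, by rw [hsum, h, add_zero]⟩

theorem stmt9 (F : Type) [Field F] (G : Type) [CommGroup G] [Fintype G]
    (hchar : ¬ (ringChar F ∣ Fintype.card G))
    (sharp : Subgroup G → Subgroup G) (hsharp : IsSharp sharp)
    (e : MonoidAlgebra F G) (he : IsPrimIdem e) (hne : e ≠ hat F (⊤ : Subgroup G)) :
    (∃! H : Subgroup G, Cocyclic H ∧ e * eH F sharp H = e) ∧
    (∀ H K : Subgroup G, Cocyclic H → e * eH F sharp H = e →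
      Cocyclic K → K ≠ H → e * eH F sharp K = 0) := by
  classical
  haveI : Finite (Subgroup G) :=
    Finite.of_injective (fun H : Subgroup G => (H : Set G)) SetLike.coe_injective
  haveI : Fintype (Subgroup G) := Fintype.ofFinite _
  set C : Finset (Subgroup G) := Finset.univ.filter (fun H : Subgroup G => Cocyclic H) with hC
  have hmemC : ∀ H : Subgroup G, H ∈ C ↔ Cocyclic H := by
    intro H
    rw [hC, Finset.mem_filter]
    exact ⟨fun h => h.2, fun h => ⟨Finset.mem_univ _, h⟩⟩
  -- orthogonality of e * e_K pieces
  have horthKey : ∀ H K : Subgroup G, Cocyclic H → Cocyclic K → H ≠ K →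
      (e * eH F sharp H) * (e * eH F sharp K) = 0 := by
    intro H K hH hK hne'
    calc (e * eH F sharp H) * (e * eH F sharp K)
        = (e * e) * (eH F sharp H * eH F sharp K) := by ring
    _ = 0 := by rw [eH_orth hchar hsharp hH hK hne', mul_zero]
  -- decomposition of e
  have hdec : e = (∑ H ∈ C, e * eH F sharp H) + e * hat F (⊤ : Subgroup G) := by
    rw [← Finset.mul_sum, ← mul_add, eH_complete hchar hsharp, mul_one]
  -- the top part vanishes
  have htopzero : e * hat F (⊤ : Subgroup G) = 0 := by
    set a := e * hat F (⊤ : Subgroup G) with ha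
    set b := ∑ H ∈ C, e * eH F sharp H with hb
    have haidem : a * a = a := by
      calc a * a = (e * e) * (hat F ⊤ * hat F ⊤) := by rw [ha]; ring
      _ = a := by rw [he.2.1, hat_top_idem hchar, ha]
    have hbidem : b * b = b := by
      rw [hb, Finset.sum_mul_sum]
      refine Finset.sum_congr rfl fun H hH => ?_
      rw [Finset.sum_eq_single H]
      · calc e * eH F sharp H * (e * eH F sharp H)
            = (e * e) * (eH F sharp H * eH F sharp H) := by ring
        _ = e * eH F sharp H := by
            rw [he.2.1, eH_idem hchar hsharp ((hmemC H).mp hH)]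
      · intro K hK hKH
        exact horthKey H K ((hmemC H).mp hH) ((hmemC K).mp hK) hKH.symm
      · intro h
        exact absurd hH h
    have hab : a * b = 0 := by
      rw [ha, hb, Finset.mul_sum]
      refine Finset.sum_eq_zero fun H hH => ?_
      calc e * hat F ⊤ * (e * eH F sharp H)
          = (e * e) * (hat F ⊤ * eH F sharp H) := by ring
      _ = 0 := by rw [hat_top_orth hchar hsharp ((hmemC H).mp hH), mul_zero]
    have hba : b * a = 0 := by rw [mul_comm]; exact hab
    have hsum' : e = a + b := by rw [ha, hb, add_comm]; exact hdec
    rcases he.2.2 a b haidem hbidem hab hba hsum' with h | h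
    · exact h
    · -- b = 0 : e = a = e * hat top ; derive contradiction
      exfalso
      have hea : e = e * hat F (⊤ : Subgroup G) := by
        rw [hsum', h, add_zero, ha, mul_assoc, hat_top_idem hchar]
      have hev : ∀ φ : G →* (AlgebraicClosure F)ˣ,
          charEv φ e = charEv φ e * (if (⊤ : Subgroup G) ≤ φ.ker then 1 else 0) := by
        intro φ
        conv_lhs => rw [hea]
        rw [map_mul, charEv_hat hchar]
      set c := charEv (1 : G →* (AlgebraicClosure F)ˣ) e with hc
      have hcc : c * c = c := by rw [hc, ← map_mul, he.2.1]
      have hker1 : ∀ φ : G →* (AlgebraicClosure F)ˣ, (⊤ : Subgroup G) ≤ φ.ker → φ = 1 := by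
        intro φ hle
        ext g
        have hg : g ∈ φ.ker := hle (Subgroup.mem_top g)
        rw [MonoidHom.mem_ker] at hg
        rw [hg, MonoidHom.one_apply]
      have heval : ∀ φ : G →* (AlgebraicClosure F)ˣ,
          charEv φ e = if φ = 1 then c else 0 := by
        intro φ
        by_cases h1 : φ = 1
        · rw [if_pos h1, h1, hc]
        · rw [if_neg h1, hev φ, if_neg (fun hle => h1 (hker1 φ hle)), mul_zero]
      have hc01 : c * (c - 1) = 0 := by rw [mul_sub, mul_one, hcc, sub_self]
      rcases mul_eq_zero.mp hc01 with h0 | h0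
      · apply he.1
        apply charEv_injective hchar
        intro φ
        rw [heval φ, map_zero]
        split_ifs
        · exact h0
        · rfl
      · apply hne
        apply charEv_injective hchar
        intro φ
        rw [heval φ, charEv_hat hchar]
        have h1 : c = 1 := by rwa [sub_eq_zero] at h0
        by_cases hφ : φ = 1
        · rw [if_pos hφ, h1, if_pos]
          rw [hφ]
          intro g _
          exact MonoidHom.mem_ker.mpr rfl
        · rw [if_neg hφ, if_neg (fun hle => hφ (hker1 φ hle))]
  -- main decomposition
  have hdecomp : e = ∑ H ∈ C, e * eH F sharp H := by
    conv_lhs => rw [hdec]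
    rw [htopzero, add_zero]
  obtain ⟨H₀, hH₀C, heH₀⟩ := prim_finset he C (fun H => e * eH F sharp H)
    (fun H hH => by
      calc e * eH F sharp H * (e * eH F sharp H)
          = (e * e) * (eH F sharp H * eH F sharp H) := by ring
      _ = e * eH F sharp H := by rw [he.2.1, eH_idem hchar hsharp ((hmemC H).mp hH)])
    (fun H hH K hK hne' => horthKey H K ((hmemC H).mp hH) ((hmemC K).mp hK) hne') hdecomp
  have hH₀ : Cocyclic H₀ := (hmemC H₀).mp hH₀C
  have hmain : e * eH F sharp H₀ = e := heH₀.symm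
  constructor
  · refine ⟨H₀, ⟨hH₀, hmain⟩, ?_⟩
    rintro K ⟨hKc, hKe⟩
    by_contra hKH
    apply he.1
    calc e = e * eH F sharp K := hKe.symm
    _ = (e * eH F sharp H₀) * eH F sharp K := by rw [hmain]
    _ = e * (eH F sharp H₀ * eH F sharp K) := by ring
    _ = 0 := by rw [eH_orth hchar hsharp hH₀ hKc (fun h => hKH h.symm), mul_zero]
  · intro H K hHc hHe hKc hKH
    calc e * eH F sharp K = (e * eH F sharp H) * eH F sharp K := by rw [hHe]
    _ = e * (eH F sharp H * eH F sharp K) := by ring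
    _ = 0 := by rw [eH_orth hchar hsharp hHc hKc (fun h => hKH h.symm), mul_zero]
end

section
/- Let G be a finite abelian group and F_q a finite field with char(F_q) ∤ |G|. If the group algebra F_q G contains an essential idempotent, then G is cyclic. -/
open scoped Classical

noncomputable def Ssum (F : Type) [Field F] {G : Type} [Group G] [Fintype G]
    (H : Subgroup G) : MonoidAlgebra F G :=
  ∑ h ∈ (H : Set G).toFinset, MonoidAlgebra.single h (1 : F)

lemma Ssum_apply (F : Type) [Field F] {G : Type} [Group G] [Fintype G]
    (H : Subgroup G) (x : G) : (Ssum F H).coeff x = if x ∈ H then (1 : F) else 0 := by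
  rw [Ssum, MonoidAlgebra.coeff_sum, Finset.sum_apply']
  simp only [MonoidAlgebra.coeff_single_apply]
  rw [Finset.sum_ite_eq' _ x (fun _ => (1:F))]
  simp [Set.mem_toFinset]

lemma hat_eq (F : Type) [Field F] {G : Type} [Group G] [Fintype G] (H : Subgroup G) :
    hat F H = (Nat.card H : F)⁻¹ • Ssum F H := rfl

lemma core (F : Type) [Field F] (G : Type) [CommGroup G] [Fintype G]
    (p : ℕ) (hp : p.Prime) (hpF : (p : F) ≠ 0)
    (g h : G) (hog : orderOf g = p) (hhp : h ^ p = 1) (hh1 : h ≠ 1)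
    (hgh : h ∉ Subgroup.zpowers g)
    (e : MonoidAlgebra F G) (hess : ∀ H : Subgroup G, H ≠ ⊥ → e * hat F H = 0) :
    e = 0 := by
  haveI : Fact p.Prime := ⟨hp⟩
  have hgp : g ^ p = 1 := by rw [← hog]; exact pow_orderOf_eq_one g
  have hg1 : g ≠ 1 := by
    intro h1; rw [h1, orderOf_one] at hog; exact hp.ne_one hog.symm
  set K := Subgroup.zpowers g ⊔ Subgroup.zpowers h with hK
  have hgK : g ∈ K := Subgroup.mem_sup_left (Subgroup.mem_zpowers g)
  have hhK : h ∈ K := Subgroup.mem_sup_right (Subgroup.mem_zpowers h)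
  have htors : ∀ k ∈ K, k ^ p = 1 := by
    intro k hk
    rw [hK, Subgroup.mem_sup] at hk
    obtain ⟨a, ha, b, hb, rfl⟩ := hk
    obtain ⟨i, rfl⟩ := ha
    obtain ⟨j, rfl⟩ := hb
    simp only [mul_pow]
    rw [← zpow_natCast (g ^ i) p, ← zpow_mul, mul_comm i (p:ℤ), zpow_mul,
      zpow_natCast, hgp, one_zpow,
      ← zpow_natCast (h ^ j) p, ← zpow_mul, mul_comm j (p:ℤ), zpow_mul,
      zpow_natCast, hhp, one_zpow, one_mul]
  have horder : ∀ k ∈ K, k ≠ 1 → orderOf k = p := fun k hk h1 =>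
    orderOf_eq_prime (htors k hk) h1
  have hcardz : ∀ k ∈ K, k ≠ 1 → Nat.card (Subgroup.zpowers k) = p := by
    intro k hk h1
    rw [Nat.card_zpowers, horder k hk h1]
  have hline : ∀ k ∈ K, k ≠ 1 → ∀ x ∈ Subgroup.zpowers k, x ≠ 1 →
      Subgroup.zpowers x = Subgroup.zpowers k := by
    intro k hk hk1 x hx hx1
    have hxK : x ∈ K := Subgroup.zpowers_le.mpr hk hx
    refine Subgroup.eq_of_le_of_card_ge (Subgroup.zpowers_le.mpr hx) ?_
    rw [hcardz k hk hk1, hcardz x hxK hx1]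
  have hdisj : Subgroup.zpowers g ⊓ Subgroup.zpowers h = ⊥ := by
    rw [eq_bot_iff]
    intro x hx
    rw [Subgroup.mem_bot]
    by_contra hx1
    have heq := hline h hhK hh1 x hx.2 hx1
    apply hgh
    have hh' : h ∈ Subgroup.zpowers x := by rw [heq]; exact Subgroup.mem_zpowers h
    exact Subgroup.zpowers_le.mpr hx.1 hh'
  have cardK : Nat.card K = p * p := by
    have hbij : Function.Bijective
        (fun ab : (Subgroup.zpowers g) × (Subgroup.zpowers h) =>
          (⟨ab.1.1 * ab.2.1, Subgroup.mul_mem_sup ab.1.2 ab.2.2⟩ : K)) := by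
      constructor
      · rintro ⟨⟨a1, ha1⟩, ⟨b1, hb1⟩⟩ ⟨⟨a2, ha2⟩, ⟨b2, hb2⟩⟩ hab
        simp only [Subtype.mk_eq_mk] at hab
        have hkey : a2⁻¹ * a1 = 1 := by
          have hmem : a2⁻¹ * a1 ∈ Subgroup.zpowers g ⊓ Subgroup.zpowers h := by
            constructor
            · exact Subgroup.mul_mem _ (Subgroup.inv_mem _ ha2) ha1
            · have h2 : a2⁻¹ * a1 = b2 * b1⁻¹ := by
                apply mul_right_cancel (b := b1)
                rw [mul_assoc, hab, inv_mul_cancel_left, mul_assoc, inv_mul_cancel,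
                  mul_one]
              rw [h2]
              exact Subgroup.mul_mem _ hb2 (Subgroup.inv_mem _ hb1)
          rw [hdisj] at hmem
          exact hmem
        have ha : a2 = a1 := inv_mul_eq_one.mp hkey
        have hb : b1 = b2 := by
          rw [← ha] at hab
          exact mul_left_cancel hab
        simp [ha, hb]
      · rintro ⟨k, hk⟩
        rw [hK, Subgroup.mem_sup] at hk
        obtain ⟨a, ha, b, hb, hab⟩ := hk
        exact ⟨⟨⟨a, ha⟩, ⟨b, hb⟩⟩, Subtype.ext hab⟩
    have := Nat.card_eq_of_bijective _ hbij
    rw [Nat.card_prod, Nat.card_zpowers, Nat.card_zpowers, hog,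
      orderOf_eq_prime hhp hh1] at this
    exact this.symm
  -- the nonidentity elements of K and the "lines" (subgroups of order p)
  set P : Finset G := (K : Set G).toFinset.erase 1 with hPdef
  set lines : Finset (Subgroup G) := P.image (fun k => Subgroup.zpowers k) with hlines
  have hmemP : ∀ k, k ∈ P ↔ k ∈ K ∧ k ≠ 1 := by
    intro k
    simp only [hPdef, Finset.mem_erase, Set.mem_toFinset, SetLike.mem_coe]
    exact and_comm
  have cardP : P.card = p * p - 1 := by
    rw [hPdef, Finset.card_erase_of_mem (by rw [Set.mem_toFinset]; exact K.one_mem),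
      Set.toFinset_card, ← Nat.card_eq_fintype_card, SetLike.coe_sort_coe, cardK]
  have fiber : ∀ x ∈ P,
      (P.filter (fun k => Subgroup.zpowers k = Subgroup.zpowers x)).card = p - 1 := by
    intro x hxP
    obtain ⟨hxK, hx1⟩ := (hmemP x).mp hxP
    have hfe : P.filter (fun k => Subgroup.zpowers k = Subgroup.zpowers x)
        = ((Subgroup.zpowers x : Set G)).toFinset.erase 1 := by
      ext k
      simp only [Finset.mem_filter, Finset.mem_erase, Set.mem_toFinset, SetLike.mem_coe,
        hmemP]
      constructor
      · rintro ⟨⟨hkK, hk1⟩, hzp⟩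
        exact ⟨hk1, by rw [← hzp]; exact Subgroup.mem_zpowers k⟩
      · rintro ⟨hk1, hkx⟩
        have hkK : k ∈ K := Subgroup.zpowers_le.mpr hxK hkx
        exact ⟨⟨hkK, hk1⟩, hline x hxK hx1 k hkx hk1⟩
    rw [hfe, Finset.card_erase_of_mem (by rw [Set.mem_toFinset]; exact Subgroup.one_mem _),
      Set.toFinset_card, ← Nat.card_eq_fintype_card, SetLike.coe_sort_coe, hcardz x hxK hx1]
  have cardLines : lines.card = p + 1 := by
    have hsum := Finset.card_eq_sum_card_image (fun k => Subgroup.zpowers k) P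
    have hsum2 : ∀ L ∈ lines, (P.filter (fun k => Subgroup.zpowers k = L)).card = p - 1 := by
      intro L hL
      obtain ⟨x, hxP, rfl⟩ := Finset.mem_image.mp hL
      exact fiber x hxP
    have hcount : P.card = lines.card * (p - 1) := by
      rw [hsum, Finset.sum_congr rfl hsum2, Finset.sum_const, smul_eq_mul]
    have hpp : (p + 1) * (p - 1) = p * p - 1 := by
      obtain ⟨q, rfl⟩ := Nat.exists_eq_add_of_le hp.two_le
      have h1 : 2 + q - 1 = q + 1 := by omega
      rw [h1]
      have h2 : (2 + q) * (2 + q) = (2 + q + 1) * (q + 1) + 1 := by ring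
      rw [h2, Nat.add_sub_cancel]
    have hpos : 0 < p - 1 := by have := hp.two_le; omega
    apply Nat.eq_of_mul_eq_mul_right hpos
    rw [← hcount, cardP, hpp]
  have hLlines : ∀ L ∈ lines, L ≠ ⊥ ∧ Nat.card L = p := by
    intro L hL
    obtain ⟨k, hkP, rfl⟩ := Finset.mem_image.mp hL
    obtain ⟨hkK, hk1⟩ := (hmemP k).mp hkP
    refine ⟨?_, hcardz k hkK hk1⟩
    intro hb
    exact hk1 (by simpa [hb, Subgroup.mem_bot] using Subgroup.mem_zpowers k)
  have hES : ∀ H : Subgroup G, H ≠ ⊥ → (Nat.card H : F) ≠ 0 → e * Ssum F H = 0 := by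
    intro H hHb hHc
    have h0 := hess H hHb
    rw [hat_eq, mul_smul_comm] at h0
    rcases smul_eq_zero.mp h0 with h1 | h1
    · exact absurd h1 (inv_ne_zero hHc)
    · exact h1
  -- the key combinatorial identity
  have hId : ∑ L ∈ lines, Ssum F L = (p : F) • (1 : MonoidAlgebra F G) + Ssum F K := by
    refine MonoidAlgebra.coeff_injective (Finsupp.ext fun x => ?_)
    rw [MonoidAlgebra.coeff_sum, Finset.sum_apply', MonoidAlgebra.coeff_add, Finsupp.add_apply,
      MonoidAlgebra.coeff_smul, Finsupp.smul_apply, MonoidAlgebra.one_def]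
    simp only [Ssum_apply, MonoidAlgebra.coeff_single_apply, smul_eq_mul]
    by_cases hx1 : x = 1
    · subst hx1
      rw [Finset.sum_congr rfl (fun L _ => if_pos (Subgroup.one_mem L)),
        Finset.sum_const, cardLines, if_pos rfl, if_pos K.one_mem]
      ring
    · by_cases hxK : x ∈ K
      · rw [Finset.sum_eq_single_of_mem (Subgroup.zpowers x)
          (Finset.mem_image.mpr ⟨x, (hmemP x).mpr ⟨hxK, hx1⟩, rfl⟩) ?_]
        · rw [if_pos (Subgroup.mem_zpowers x), if_neg (fun hc => hx1 hc.symm),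
            if_pos hxK]
          ring
        · intro L hL hne
          rw [if_neg]
          intro hxL
          obtain ⟨k, hkP, rfl⟩ := Finset.mem_image.mp hL
          obtain ⟨hkK, hk1⟩ := (hmemP k).mp hkP
          exact hne (hline k hkK hk1 x hxL hx1).symm
      · rw [Finset.sum_eq_zero, if_neg (fun hc => hx1 hc.symm), if_neg hxK]
        · ring
        · intro L hL
          rw [if_neg]
          intro hxL
          obtain ⟨k, hkP, rfl⟩ := Finset.mem_image.mp hL
          obtain ⟨hkK, _⟩ := (hmemP k).mp hkP
          exact hxK (Subgroup.zpowers_le.mpr hkK hxL)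
  have hsum0 : e * (∑ L ∈ lines, Ssum F L) = 0 := by
    rw [Finset.mul_sum]
    refine Finset.sum_eq_zero fun L hL => ?_
    obtain ⟨hLb, hLc⟩ := hLlines L hL
    exact hES L hLb (by rw [hLc]; exact hpF)
  have hKb : K ≠ ⊥ := by
    intro hb
    rw [hb, Subgroup.mem_bot] at hgK
    exact hg1 hgK
  have hEK : e * Ssum F K = 0 := hES K hKb (by
    rw [cardK]; push_cast; exact mul_ne_zero hpF hpF)
  rw [hId, mul_add, mul_smul_comm, mul_one, hEK, add_zero] at hsum0
  rcases smul_eq_zero.mp hsum0 with h1 | h1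
  · exact absurd h1 hpF
  · exact h1

lemma extract_two (G : Type) [CommGroup G] [Fintype G] (hnc : ¬ IsCyclic G) :
    ∃ p : ℕ, p.Prime ∧ ∃ g h : G, orderOf g = p ∧ h ^ p = 1 ∧ h ≠ 1 ∧
      h ∉ Subgroup.zpowers g := by
  obtain ⟨g, hg⟩ := Monoid.exists_orderOf_eq_exponent (G := G)
    Monoid.ExponentExists.of_finite
  set m := Monoid.exponent G with hm
  have hm0 : m ≠ 0 := Monoid.ExponentExists.of_finite.exponent_ne_zero
  have hgt : Subgroup.zpowers g ≠ ⊤ := by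
    intro h
    refine hnc ⟨⟨g, fun x => ?_⟩⟩
    show x ∈ Subgroup.zpowers g
    rw [h]; exact Subgroup.mem_top x
  set Q := G ⧸ Subgroup.zpowers g with hQ
  obtain ⟨x0, hx0⟩ : ∃ x : G, x ∉ Subgroup.zpowers g := by
    by_contra hc
    push_neg at hc
    exact hgt ((Subgroup.eq_top_iff' _).mpr hc)
  have hQnt : Nontrivial Q := by
    refine ⟨QuotientGroup.mk x0, 1, fun hc => hx0 ?_⟩
    exact (QuotientGroup.eq_one_iff x0).mp hc
  have hQcard : 1 < Nat.card Q := Finite.one_lt_card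
  set p := (Nat.card Q).minFac with hpdef
  have hp : p.Prime := Nat.minFac_prime (by omega)
  haveI : Fact p.Prime := ⟨hp⟩
  obtain ⟨xbar, hxbar⟩ := exists_prime_orderOf_dvd_card' (G := Q) p
    (Nat.minFac_dvd _)
  set x := Quotient.out xbar with hx
  have hmk : (QuotientGroup.mk x : Q) = xbar := Quotient.out_eq xbar
  have hxp : x ^ p ∈ Subgroup.zpowers g := by
    rw [← QuotientGroup.eq_one_iff]
    rw [QuotientGroup.mk_pow, hmk, ← hxbar]
    exact pow_orderOf_eq_one xbar
  have hxnot : x ∉ Subgroup.zpowers g := by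
    intro hc
    have : xbar = 1 := by rw [← hmk]; exact (QuotientGroup.eq_one_iff x).mpr hc
    rw [this, orderOf_one] at hxbar
    exact hp.ne_one hxbar.symm
  have hpm : p ∣ m := by
    have h1 : orderOf xbar ∣ orderOf x := by
      rw [← hmk]
      exact orderOf_map_dvd (QuotientGroup.mk' (Subgroup.zpowers g)) x
    rw [hxbar] at h1
    exact h1.trans (Monoid.order_dvd_exponent x)
  obtain ⟨k, hk0⟩ := hxp
  have hk : g ^ k = x ^ p := hk0
  have hxm : x ^ m = 1 := Monoid.pow_exponent_eq_one x
  have hmp : p * (m / p) = m := Nat.mul_div_cancel' hpm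
  have hmpne : ((m / p : ℕ) : ℤ) ≠ 0 := by
    have : m / p ≠ 0 := by
      intro hz; rw [hz, Nat.mul_zero] at hmp; exact hm0 hmp.symm
    exact_mod_cast this
  have hgk : g ^ (k * (m / p : ℕ)) = 1 := by
    have h1 : (g ^ k) ^ (m / p : ℕ) = (x ^ p) ^ (m / p : ℕ) := by rw [hk]
    rw [← pow_mul, hmp, hxm] at h1
    rw [zpow_mul, zpow_natCast]
    exact h1
  have hdvd := orderOf_dvd_iff_zpow_eq_one.mpr hgk
  rw [hg] at hdvd
  obtain ⟨c, hc⟩ : ∃ c : ℤ, k = p * c := by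
    have hmc : (m : ℤ) = (p : ℤ) * ((m / p : ℕ) : ℤ) := by exact_mod_cast hmp.symm
    rw [hmc] at hdvd
    obtain ⟨c, hc⟩ := hdvd
    refine ⟨c, mul_left_cancel₀ hmpne ?_⟩
    linear_combination hc
  set y := x * g ^ (-c) with hy
  have hyp : y ^ p = 1 := by
    rw [hy, mul_pow, ← hk, ← zpow_natCast (g ^ (-c)) p, ← zpow_mul, ← zpow_add]
    rw [hc]
    norm_num [mul_comm]
  have hynot : y ∉ Subgroup.zpowers g := by
    intro hcmem
    apply hxnot
    have : x = y * g ^ c := by rw [hy, mul_assoc, ← zpow_add]; simp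
    rw [this]
    exact Subgroup.mul_mem _ hcmem (Subgroup.zpow_mem _ (Subgroup.mem_zpowers g) c)
  have hy1 : y ≠ 1 := fun h1 => hynot (h1 ▸ Subgroup.one_mem _)
  refine ⟨p, hp, g ^ (m / p), y, ?_, hyp, hy1, ?_⟩
  · rw [orderOf_pow, hg, Nat.gcd_eq_right (Nat.div_dvd_of_dvd hpm),
      Nat.div_div_self hpm hm0]
  · intro hcmem
    exact hynot (Subgroup.zpowers_le.mpr (Subgroup.pow_mem _ (Subgroup.mem_zpowers g) _) hcmem)

theorem stmt16 (F : Type) [Field F] [Fintype F] (G : Type) [CommGroup G] [Fintype G]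
    (hchar : ¬ (ringChar F ∣ Fintype.card G))
    (e : MonoidAlgebra F G) (he : IsPrimIdem e)
    (hess : ∀ H : Subgroup G, H ≠ ⊥ → e * hat F H = 0) :
    IsCyclic G := by
  by_contra hnc
  obtain ⟨p, hp, g, h, hog, hhp, hh1, hgh⟩ := extract_two G hnc
  have hpdvd : p ∣ Fintype.card G := hog ▸ orderOf_dvd_card
  have hpF : (p : F) ≠ 0 := by
    intro h0
    have hd := ringChar.dvd h0
    rcases hp.eq_one_or_self_of_dvd _ hd with h1 | h1
    · exact CharP.ringChar_ne_one h1
    · exact hchar (h1 ▸ hpdvd)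
  exact he.1 (core F G p hp hpF g h hog hhp hh1 hgh e hess)
end

section
/- Let p be a prime, n ≥ 1, G cyclic of order pⁿ generated by g, and F_q a finite field with the class of q generating U(Z_{pⁿ}). For 1 ≤ i ≤ n, the minimal ideal I_i = (F_qG)e_i generated by e_i = Ĝ_i − Ĝ_{i−1} (with G_i = ⟨g^{p^i}⟩) has F_q-dimension φ(p^i) = p^i − p^{i−1}. -/
open scoped Classical

section Aux

variable {F G : Type} [Field F] [CommGroup G] [Fintype G]

lemma hat_mul_single (H : Subgroup G) {h : G} (hh : h ∈ H) :
    hat F H * MonoidAlgebra.single h (1 : F) = hat F H := by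
  unfold hat
  rw [smul_mul_assoc, Finset.sum_mul]
  congr 1
  refine Finset.sum_nbij' (fun k => k * h) (fun k => k * h⁻¹) ?_ ?_ ?_ ?_ ?_
  · intro a ha
    simp only [Set.mem_toFinset] at *
    exact H.mul_mem ha hh
  · intro a ha
    simp only [Set.mem_toFinset] at *
    exact H.mul_mem ha (H.inv_mem hh)
  · intro a _; group
  · intro a _; group
  · intro a _
    rw [MonoidAlgebra.single_mul_single, mul_one]

lemma hat_mul_hat {K H : Subgroup G} (hKH : K ≤ H) (hK : (Nat.card K : F) ≠ 0) :
    hat F K * hat F H = hat F H := by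
  conv_lhs => rw [hat, smul_mul_assoc, Finset.sum_mul]
  have : ∀ k ∈ (K : Set G).toFinset,
      MonoidAlgebra.single k (1:F) * hat F H = hat F H := by
    intro k hk
    rw [mul_comm]
    exact hat_mul_single H (hKH (by simpa using hk))
  rw [Finset.sum_congr rfl this, Finset.sum_const, Set.toFinset_card,
    ← Nat.card_eq_fintype_card, ← Nat.cast_smul_eq_nsmul F, smul_smul, SetLike.coe_sort_coe,
    inv_mul_cancel₀ hK, one_smul]

lemma single_out_mul_hat (H : Subgroup G) (a : G) :
    MonoidAlgebra.single (Quotient.out (QuotientGroup.mk a : G ⧸ H)) (1:F) * hat F H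
      = MonoidAlgebra.single a (1:F) * hat F H := by
  obtain ⟨h, hh⟩ := QuotientGroup.mk_out_eq_mul H a
  rw [hh, show (MonoidAlgebra.single (a * (h:G)) (1:F)) =
      MonoidAlgebra.single a 1 * MonoidAlgebra.single (h:G) 1 by
        rw [MonoidAlgebra.single_mul_single, mul_one],
    mul_assoc, mul_comm (MonoidAlgebra.single (h:G) (1:F)), hat_mul_single H h.2]

lemma lmapDomain_hat (H : Subgroup G) (hH : (Nat.card H : F) ≠ 0) :
    MonoidAlgebra.mapDomainLinearMap F F (QuotientGroup.mk (s := H)) (hat F H)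
      = (1 : MonoidAlgebra F (G ⧸ H)) := by
  rw [hat, map_smul, map_sum]
  have : ∀ h ∈ (H : Set G).toFinset,
      MonoidAlgebra.mapDomainLinearMap F F (QuotientGroup.mk (s := H)) (MonoidAlgebra.single h (1:F))
        = MonoidAlgebra.single (1 : G ⧸ H) (1:F) := by
    intro h hh
    rw [MonoidAlgebra.mapDomainLinearMap_single]
    congr 1
    exact (QuotientGroup.eq_one_iff h).mpr (by simpa using hh)
  rw [Finset.sum_congr rfl this, Finset.sum_const, Set.toFinset_card,
    ← Nat.card_eq_fintype_card, ← Nat.cast_smul_eq_nsmul F, smul_smul, SetLike.coe_sort_coe,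
    inv_mul_cancel₀ hH, one_smul]
  exact MonoidAlgebra.one_def.symm

lemma range_mulRight_hat (H : Subgroup G) (hH : (Nat.card H : F) ≠ 0) :
    LinearMap.range (LinearMap.mulRight F (hat F H)) =
      Submodule.span F (Set.range fun c : G ⧸ H =>
        MonoidAlgebra.single (Quotient.out c) (1:F) * hat F H) := by
  apply le_antisymm
  · rintro _ ⟨x, rfl⟩
    rw [LinearMap.mulRight_apply]
    induction x using MonoidAlgebra.induction_linear with
    | zero => rw [zero_mul]; exact Submodule.zero_mem _
    | add f g hf hg => rw [add_mul]; exact Submodule.add_mem _ hf hg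
    | single a b =>
      have : (MonoidAlgebra.single a b : MonoidAlgebra F G) = b • MonoidAlgebra.single a 1 := by
        rw [MonoidAlgebra.smul_single', mul_one]
      rw [this, smul_mul_assoc, ← single_out_mul_hat H a]
      exact Submodule.smul_mem _ _ (Submodule.subset_span ⟨QuotientGroup.mk a, rfl⟩)
  · rw [Submodule.span_le]
    rintro _ ⟨c, rfl⟩
    exact ⟨MonoidAlgebra.single (Quotient.out c) (1:F), rfl⟩

lemma linearIndependent_single_out_mul_hat (H : Subgroup G) (hH : (Nat.card H : F) ≠ 0) :
    LinearIndependent F (fun c : G ⧸ H =>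
      MonoidAlgebra.single (Quotient.out c) (1:F) * hat F H) := by
  apply LinearIndependent.of_comp (MonoidAlgebra.mapDomainLinearMap F F (QuotientGroup.mk (s := H)))
  have : (⇑(MonoidAlgebra.mapDomainLinearMap F F (QuotientGroup.mk (s := H))) ∘ fun c : G ⧸ H =>
      MonoidAlgebra.single (Quotient.out c) (1:F) * hat F H)
      = fun c : G ⧸ H => MonoidAlgebra.single c (1:F) := by
    funext c
    simp only [Function.comp_apply]
    have hmul := MonoidAlgebra.mapDomain_mul (QuotientGroup.mk' H)
      (MonoidAlgebra.single (Quotient.out c) (1:F)) (hat F H)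
    rw [show ⇑(QuotientGroup.mk' H) = (QuotientGroup.mk (s := H)) from rfl] at hmul
    change MonoidAlgebra.mapDomain (QuotientGroup.mk (s := H)) (_ * _) = _
    rw [hmul]
    rw [show MonoidAlgebra.mapDomain (QuotientGroup.mk (s := H)) (hat F H)
        = MonoidAlgebra.mapDomainLinearMap F F (QuotientGroup.mk (s := H)) (hat F H) from rfl,
      lmapDomain_hat H hH, MonoidAlgebra.mapDomain_single, mul_one, QuotientGroup.out_eq']
  rw [this]
  convert (MonoidAlgebra.basis (G ⧸ H) F).linearIndependent using 1
  funext c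
  exact (MonoidAlgebra.basis_apply F c).symm

lemma finrank_range_mulRight_hat (H : Subgroup G) (hH : (Nat.card H : F) ≠ 0) :
    Module.finrank F (LinearMap.range (LinearMap.mulRight F (hat F H)))
      = Nat.card (G ⧸ H) := by
  rw [range_mulRight_hat H hH,
    finrank_span_eq_card (linearIndependent_single_out_mul_hat H hH),
    Nat.card_eq_fintype_card]

lemma finrank_range_sub {u v : MonoidAlgebra F G} (hu : u * u = u) (hv : v * v = v)
    (huv : u * v = v) :
    Module.finrank F (LinearMap.range (LinearMap.mulRight F (u - v)))
      = Module.finrank F (LinearMap.range (LinearMap.mulRight F u))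
        - Module.finrank F (LinearMap.range (LinearMap.mulRight F v)) := by
  haveI : FiniteDimensional F (MonoidAlgebra F G) :=
    Module.Finite.equiv (MonoidAlgebra.coeffLinearEquiv F).symm
  set A := LinearMap.range (LinearMap.mulRight F u) with hA
  set B := LinearMap.range (LinearMap.mulRight F v) with hB
  set E := LinearMap.range (LinearMap.mulRight F (u - v)) with hE
  have hvu : v * u = v := by rw [mul_comm]; exact huv
  have he : (u - v) * (u - v) = u - v := by
    rw [sub_mul, mul_sub, mul_sub, hu, huv, hvu, hv]; ring
  have hBA : B ≤ A := by
    rintro _ ⟨x, rfl⟩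
    exact ⟨x * v, by rw [LinearMap.mulRight_apply, LinearMap.mulRight_apply, mul_assoc, hvu]⟩
  have hEA : E ≤ A := by
    rintro _ ⟨x, rfl⟩
    refine ⟨x * (u - v), ?_⟩
    rw [LinearMap.mulRight_apply, LinearMap.mulRight_apply, mul_assoc]
    congr 1
    rw [sub_mul, hu, hvu]
  have hsup : B ⊔ E = A := by
    refine le_antisymm (sup_le hBA hEA) ?_
    rintro _ ⟨x, rfl⟩
    refine Submodule.mem_sup.mpr ⟨x * v, ⟨x, rfl⟩, x * (u - v), ⟨x, rfl⟩, ?_⟩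
    rw [LinearMap.mulRight_apply, ← mul_add, add_sub_cancel]
  have hinf : B ⊓ E = ⊥ := by
    rw [eq_bot_iff]
    rintro z ⟨hzB, hzE⟩
    obtain ⟨x, hx⟩ := hzB
    obtain ⟨y, hy⟩ := hzE
    rw [LinearMap.mulRight_apply] at hx hy
    have h1 : z * (u - v) = z := by rw [← hy, mul_assoc, he]
    have h2 : z * (u - v) = 0 := by
      rw [← hx, mul_assoc, mul_sub, hvu, hv, sub_self, mul_zero]
    rw [Submodule.mem_bot, ← h1, h2]
  have := Submodule.finrank_sup_add_finrank_inf_eq B E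
  rw [hsup, hinf, finrank_bot] at this
  omega

theorem stmt18 (p n : ℕ) (hp : p.Prime) (hn : 1 ≤ n)
    (F : Type) [Field F] [Fintype F]
    (G : Type) [CommGroup G] [Fintype G] (g : G)
    (hgen : ∀ x : G, x ∈ Subgroup.zpowers g) (hcard : Fintype.card G = p ^ n)
    (hcop : Nat.Coprime (Fintype.card F) p)
    -- the order of `q = |F|` modulo `pⁿ` is `φ(pⁿ)`
    (hord : orderOf ((Fintype.card F : ZMod (p ^ n))) = Nat.totient (p ^ n))
    (i : ℕ) (hi1 : 1 ≤ i) (hin : i ≤ n) :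
    Module.finrank F
      (LinearMap.range (LinearMap.mulRight F
        (hat F (Subgroup.zpowers (g ^ p ^ i)) - hat F (Subgroup.zpowers (g ^ p ^ (i - 1)))))) =
      p ^ i - p ^ (i - 1) := by
  -- `p` is nonzero in `F`
  have hpF : (p : F) ≠ 0 := by
    intro h0
    have hchar : ringChar F ∣ p := (CharP.cast_eq_zero_iff F (ringChar F) p).mp h0
    obtain ⟨k, hpr, hFcard⟩ := FiniteField.card F (ringChar F)
    have hrp : ringChar F = p := (Nat.prime_dvd_prime_iff_eq hpr hp).mp hchar
    have hdvd : p ∣ Fintype.card F := by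
      rw [hFcard, hrp]; exact dvd_pow_self p k.ne_zero
    exact hp.one_lt.ne' (Nat.Coprime.eq_one_of_dvd hcop.symm hdvd)
  have horder : orderOf g = p ^ n := by
    rw [orderOf_eq_card_of_forall_mem_zpowers hgen, Nat.card_eq_fintype_card, hcard]
  have hcardG : Nat.card G = p ^ n := by rw [Nat.card_eq_fintype_card, hcard]
  -- cardinality of `zpowers (g ^ p ^ j)` for `j ≤ n`
  have cardZ : ∀ j, j ≤ n → Nat.card (Subgroup.zpowers (g ^ p ^ j)) = p ^ (n - j) := by
    intro j hj
    rw [Nat.card_zpowers, orderOf_pow, horder,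
      Nat.gcd_eq_right (pow_dvd_pow p hj), Nat.pow_div hj hp.pos]
  have cardQ : ∀ j, j ≤ n → Nat.card (G ⧸ Subgroup.zpowers (g ^ p ^ j)) = p ^ j := by
    intro j hj
    have h1 := Subgroup.card_eq_card_quotient_mul_card_subgroup
      (Subgroup.zpowers (g ^ p ^ j))
    rw [hcardG, cardZ j hj] at h1
    have h2 : p ^ n = p ^ j * p ^ (n - j) := by
      rw [← pow_add]; congr 1; omega
    rw [h2] at h1
    exact (Nat.eq_of_mul_eq_mul_right (pow_pos hp.pos _) h1.symm)
  have hi1n : i - 1 ≤ n := le_trans (Nat.sub_le i 1) hin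
  have hKne : ((Nat.card (Subgroup.zpowers (g ^ p ^ i)) : F)) ≠ 0 := by
    rw [cardZ i hin]; push_cast; exact pow_ne_zero _ hpF
  have hHne : ((Nat.card (Subgroup.zpowers (g ^ p ^ (i - 1))) : F)) ≠ 0 := by
    rw [cardZ (i - 1) hi1n]; push_cast; exact pow_ne_zero _ hpF
  have hKH : Subgroup.zpowers (g ^ p ^ i) ≤ Subgroup.zpowers (g ^ p ^ (i - 1)) := by
    rw [Subgroup.zpowers_le]
    refine ⟨(p : ℤ), ?_⟩
    show (g ^ p ^ (i - 1)) ^ (p : ℤ) = g ^ p ^ i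
    rw [zpow_natCast, ← pow_mul, ← pow_succ, Nat.sub_add_cancel hi1]
  rw [finrank_range_sub (hat_mul_hat le_rfl hKne) (hat_mul_hat le_rfl hHne)
      (hat_mul_hat hKH hKne),
    finrank_range_mulRight_hat _ hKne, finrank_range_mulRight_hat _ hHne,
    cardQ i hin, cardQ (i - 1) hi1n]

end Aux
end
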